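/- arXiv:2304.10501 — 8 statements merged into one kernel-verified Lean document; each statement's English description precedes it below -/
import Mathlib

section
/- Let G be a finite cyclic group with generating set {g_1, ..., g_m}. Then there exist integers r_1, ..., r_{m-1} such that g_m · g_1^{r_1} · g_2^{r_2} · ... · g_{m-1}^{r_{m-1}} generates G. -/
lemma keyN (a b g : ℕ) (hg : g ≠ 0) (h : Nat.gcd (Nat.gcd a b) g = 1) :
    ∃ r : ℕ, Nat.gcd (a + r * b) g = 1 := by
  set r := ∏ p ∈ g.primeFactors.filter (fun p => ¬ p ∣ a), p with hr
  refine ⟨r, ?_⟩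
  by_contra hne
  obtain ⟨p, hp, hpd⟩ := Nat.exists_prime_and_dvd hne
  have hpg : p ∣ g := hpd.trans (Nat.gcd_dvd_right _ _)
  have hps : p ∣ a + r * b := hpd.trans (Nat.gcd_dvd_left _ _)
  by_cases hpa : p ∣ a
  · have hpb : ¬ p ∣ b := by
      intro hpb
      have : p ∣ 1 := h ▸ Nat.dvd_gcd (Nat.dvd_gcd hpa hpb) hpg
      exact hp.ne_one (Nat.dvd_one.mp this)
    have hprb : p ∣ r * b := (Nat.dvd_add_right hpa).mp hps
    have hpr : p ∣ r := (hp.dvd_mul.mp hprb).resolve_right hpb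
    obtain ⟨q, hq, hpq⟩ := (Nat.Prime.prime hp).exists_mem_finset_dvd hpr
    simp only [Finset.mem_filter, Nat.mem_primeFactors] at hq
    have : p = q := (Nat.prime_dvd_prime_iff_eq hp hq.1.1).mp hpq
    exact hq.2 (this ▸ hpa)
  · have hpr : p ∣ r := Finset.dvd_prod_of_mem _ (by
      simp only [Finset.mem_filter, Nat.mem_primeFactors]
      exact ⟨⟨hp, hpg, hg⟩, hpa⟩)
    have : p ∣ a := by
      have := Nat.dvd_sub hps (hpr.mul_right b)
      simpa using this
    exact hpa this

lemma foldr_gcd_dvd_seed (n : ℕ) : ∀ l : List ℕ, l.foldr Nat.gcd n ∣ n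
  | [] => dvd_rfl
  | x :: xs => (Nat.gcd_dvd_right x _).trans (foldr_gcd_dvd_seed n xs)

lemma foldr_gcd_dvd_mem (n : ℕ) : ∀ (l : List ℕ), ∀ x ∈ l, l.foldr Nat.gcd n ∣ x
  | x :: xs, y, hy => by
    rcases List.mem_cons.mp hy with h | h
    · exact h ▸ Nat.gcd_dvd_left x _
    · exact (Nat.gcd_dvd_right x _).trans (foldr_gcd_dvd_mem n xs y h)

lemma keyList (n : ℕ) (hn : n ≠ 0) : ∀ (l : List ℕ) (a : ℕ),
    Nat.gcd a (l.foldr Nat.gcd n) = 1 →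
    ∃ r : List ℕ, r.length = l.length ∧
      Nat.gcd (a + (List.zipWith (· * ·) r l).sum) n = 1
  | [], a, h => ⟨[], rfl, by simpa using h⟩
  | b :: l, a, h => by
    have hg : l.foldr Nat.gcd n ≠ 0 := fun h0 =>
      hn (Nat.eq_zero_of_zero_dvd (h0 ▸ foldr_gcd_dvd_seed n l))
    have h' : Nat.gcd (Nat.gcd a b) (l.foldr Nat.gcd n) = 1 := by
      rw [Nat.gcd_assoc]; exact h
    obtain ⟨r0, hr0⟩ := keyN a b _ hg h'
    obtain ⟨r, hrl, hrg⟩ := keyList n hn l (a + r0 * b) hr0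
    exact ⟨r0 :: r, by simp [hrl], by simpa [add_assoc] using hrg⟩

lemma prod_ofFn_zpow {G : Type*} [Group G] (t : G) :
    ∀ (k : ℕ) (e : Fin k → ℤ), (List.ofFn fun i => t ^ e i).prod = t ^ (∑ i, e i)
  | 0, e => by simp
  | k + 1, e => by
    rw [List.ofFn_succ, List.prod_cons, Fin.sum_univ_succ, zpow_add]
    congr 1
    exact prod_ofFn_zpow t k (fun i => e i.succ)

/-- If `G` is a finite cyclic group generated by `g_1, …, g_{m+1}`, then there are integers
`r_1, …, r_m` such that `g_{m+1} * g_1^{r_1} * ⋯ * g_m^{r_m}` generates `G`. -/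
theorem stmt1 {G : Type*} [Group G] [Finite G] [IsCyclic G]
    (m : ℕ) (g : Fin (m + 1) → G)
    (hgen : Subgroup.closure (Set.range g) = ⊤) :
    ∃ r : Fin m → ℤ,
      Subgroup.zpowers
        (g (Fin.last m) * (List.ofFn fun i : Fin m => g i.castSucc ^ r i).prod) = ⊤ := by
  obtain ⟨t, ht⟩ := IsCyclic.exists_generator (α := G)
  set n := orderOf t with hn
  have hn0 : n ≠ 0 := (orderOf_pos t).ne'
  have hex : ∀ i, ∃ k : ℕ, t ^ k = g i := fun i =>
    mem_powers_iff_mem_zpowers.mpr (ht (g i))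
  choose α hα using hex
  set l : List ℕ := List.ofFn (fun i : Fin m => α i.castSucc) with hl
  set a : ℕ := α (Fin.last m) with ha
  set d : ℕ := Nat.gcd a (l.foldr Nat.gcd n) with hd
  have hdn : d ∣ n := (Nat.gcd_dvd_right _ _).trans (foldr_gcd_dvd_seed n l)
  have hdα : ∀ i, d ∣ α i := by
    intro i
    induction i using Fin.lastCases with
    | last => exact Nat.gcd_dvd_left _ _
    | cast j =>
      exact (Nat.gcd_dvd_right _ _).trans
        (foldr_gcd_dvd_mem n l _ (by simp [hl, List.mem_ofFn]))
  have hd1 : d = 1 := by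
    have hsub : Subgroup.closure (Set.range g) ≤ Subgroup.zpowers (t ^ d) := by
      rw [Subgroup.closure_le]
      rintro x ⟨i, rfl⟩
      obtain ⟨c, hc⟩ := hdα i
      have : g i = (t ^ d) ^ c := by rw [← hα i, hc, pow_mul]
      rw [this]
      exact Subgroup.pow_mem _ (Subgroup.mem_zpowers _) c
    have htm : t ∈ Subgroup.zpowers (t ^ d) := by
      rw [hgen] at hsub
      exact hsub (Subgroup.mem_top t)
    obtain ⟨k, hk⟩ := Subgroup.mem_zpowers_iff.mp htm
    have h1 : t ^ ((d : ℤ) * k - 1) = 1 := by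
      rw [zpow_sub, zpow_mul, zpow_natCast, zpow_one, hk, mul_inv_cancel]
    have h2 : (n : ℤ) ∣ (d : ℤ) * k - 1 := by
      rw [hn]; exact orderOf_dvd_iff_zpow_eq_one.mpr h1
    have h3 : (d : ℤ) ∣ 1 := by
      have hdk : (d : ℤ) ∣ (d : ℤ) * k - 1 := (Int.natCast_dvd_natCast.mpr hdn).trans h2
      have : (d : ℤ) ∣ (d : ℤ) * k - ((d : ℤ) * k - 1) := dvd_sub (Dvd.intro k rfl) hdk
      simpa using this
    exact Nat.dvd_one.mp (by exact_mod_cast h3)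
  obtain ⟨r, hrl, hrg⟩ := keyList n hn0 l a hd1
  have hrlen : r.length = m := by simpa [hl] using hrl
  refine ⟨fun i => (r.getD i 0 : ℤ), ?_⟩
  set s : ℕ := a + (List.zipWith (· * ·) r l).sum with hs
  have h2 : (List.zipWith (· * ·) r l).sum = ∑ i : Fin m, r.getD i 0 * α i.castSucc := by
    rw [← List.sum_ofFn]
    congr 1
    apply List.ext_getElem
    · simp [hrlen, hl]
    · intro i h1' h2'
      simp only [List.getElem_zipWith, List.getElem_ofFn]
      have hi : i < m := by simpa [hrlen, hl] using h1'
      rw [List.getD_eq_getElem r 0 (by omega : i < r.length)]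
      simp [hl]
  have hel : g (Fin.last m) * (List.ofFn fun i : Fin m => g i.castSucc ^ ((r.getD i 0 : ℤ))).prod
      = t ^ s := by
    have hfun : (fun i : Fin m => g i.castSucc ^ ((r.getD i 0 : ℤ)))
        = fun i : Fin m => t ^ ((α i.castSucc : ℤ) * (r.getD i 0 : ℤ)) := by
      funext i
      rw [← hα i.castSucc, ← zpow_natCast t (α i.castSucc), ← zpow_mul]
    rw [hfun, prod_ofFn_zpow, ← hα (Fin.last m), ← zpow_natCast t a, ← zpow_add,
      ← zpow_natCast t s]
    congr 1
    rw [hs]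
    push_cast [h2]
    rw [Finset.sum_congr rfl (fun i _ => mul_comm ((α i.castSucc : ℤ)) _)]
  rw [hel]
  have hcop : IsCoprime (s : ℤ) (n : ℤ) := by
    rw [Int.isCoprime_iff_gcd_eq_one]
    exact_mod_cast hrg
  obtain ⟨u, v, huv⟩ := hcop
  have htmem : t ∈ Subgroup.zpowers (t ^ s) := by
    refine ⟨u, ?_⟩
    have : ((t ^ s) ^ u) * ((t ^ n) ^ v : G) = t := by
      rw [← zpow_natCast t s, ← zpow_natCast t n, ← zpow_mul, ← zpow_mul, ← zpow_add,
        show (s : ℤ) * u + (n : ℤ) * v = 1 by linarith [huv], zpow_one]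
    simpa [hn, pow_orderOf_eq_one] using this
  rw [eq_top_iff]
  intro x _
  obtain ⟨k, hk⟩ := Subgroup.mem_zpowers_iff.mp (ht x)
  rw [← hk]
  exact Subgroup.zpow_mem _ htmem k
end

section
/- Let F be a free group of finite rank d with basis {x_1,...,x_d}, let c be a positive integer, and let φ : F → ℤ/cℤ be a surjective homomorphism. Then there exists an automorphism λ of F such that φ(λ(x_1)) generates ℤ/cℤ. -/
lemma lift_coprime {c : ℕ} (hc : 0 < c) {k : ℕ} (hkc : k ∣ c) {a : ℕ} (hak : Nat.Coprime a k) :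
    ∃ s : ℤ, ∃ b : ℕ, Nat.Coprime b c ∧ (b : ℤ) = (a : ℤ) + s * k := by
  haveI : NeZero c := ⟨hc.ne'⟩
  have hv : IsUnit ((a : ZMod k)) := (ZMod.isUnit_iff_coprime a k).2 hak
  obtain ⟨v, hv⟩ := hv
  obtain ⟨u, hu⟩ := ZMod.unitsMap_surjective hkc v
  have h1 : (((↑u : ZMod c).val : ℕ) : ZMod k) = (a : ZMod k) := by
    rw [ZMod.natCast_val]
    have := congrArg (Units.val) hu
    rw [show ((ZMod.unitsMap hkc u : (ZMod k)ˣ) : ZMod k) = ZMod.castHom hkc (ZMod k) (u : ZMod c) by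
      simp [ZMod.unitsMap]] at this
    rw [ZMod.castHom_apply] at this
    rw [this, hv]
  have h2 : ((((↑u : ZMod c).val : ℤ)) : ZMod k) = ((a : ℤ) : ZMod k) := by
    push_cast
    exact_mod_cast h1
  rw [ZMod.intCast_eq_intCast_iff] at h2
  obtain ⟨s0, hs0⟩ := h2.dvd
  exact ⟨-s0, (↑u : ZMod c).val, ZMod.val_coe_unit_coprime u, by linarith [hs0]⟩


lemma gen_of_isUnit {c : ℕ} [NeZero c] {x : ZMod c} (hx : IsUnit x) :
    Subgroup.zpowers (Multiplicative.ofAdd x) = ⊤ := by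
  rw [Subgroup.eq_top_iff']
  intro y
  obtain ⟨u, hu⟩ := hx
  refine ⟨(((Multiplicative.toAdd y) * ↑u⁻¹ : ZMod c).val : ℤ), ?_⟩
  apply Multiplicative.toAdd.injective
  rw [toAdd_zpow, natCast_zsmul, nsmul_eq_mul, ZMod.natCast_val, ZMod.cast_id]
  rw [toAdd_ofAdd, ← hu, mul_assoc, Units.inv_mul, mul_one]

lemma key {c d : ℕ} (hc : 0 < c) [NeZero d] (β : Fin d → ZMod c)
    (h1 : (1 : ZMod c) ∈ Submodule.span ℤ (Set.range β)) :
    ∃ T : Fin d → ℤ, T 0 = 0 ∧ ∃ b : ℕ, Nat.Coprime b c ∧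
      β 0 + ∑ i, T i • β i = ((b : ℕ) : ZMod c) := by
  haveI : NeZero c := ⟨hc.ne'⟩
  set a : Fin d → ℤ := fun i => ((β i).val : ℤ) with ha
  have hcast : ∀ i, ((a i : ℤ) : ZMod c) = β i := by
    intro i
    simp [ha, ZMod.natCast_val, ZMod.cast_id]
  -- integer Bezout relation from h1
  obtain ⟨m, hm⟩ := (Submodule.mem_span_range_iff_exists_fun ℤ).1 h1
  have hmrel : ((∑ i, m i * a i : ℤ) : ZMod c) = ((1 : ℤ) : ZMod c) := by
    push_cast
    simp only [← hcast] at hm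
    rw [← hm]
    refine Finset.sum_congr rfl fun i _ => ?_
    rw [zsmul_eq_mul]
  rw [ZMod.intCast_eq_intCast_iff] at hmrel
  obtain ⟨M, hM⟩ := hmrel.dvd  -- 1 - ∑ ... = c * M
  -- the ideal generated by c and the a i, i ≠ 0
  set f : Fin d → ℤ := fun i => if i = 0 then (c : ℤ) else a i with hf
  set S : Ideal ℤ := Ideal.span (Set.range f) with hS
  haveI : S.IsPrincipal := IsPrincipalIdealRing.principal S
  set k : ℤ := Submodule.IsPrincipal.generator S with hk
  have hdvd : ∀ i, k ∣ f i := by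
    intro i
    have h1 : f i ∈ S := Ideal.subset_span ⟨i, rfl⟩
    rw [← Ideal.span_singleton_generator S, Ideal.mem_span_singleton] at h1
    exact h1
  obtain ⟨t, ht⟩ := (Submodule.mem_span_range_iff_exists_fun ℤ).1
    (show k ∈ Submodule.span ℤ (Set.range f) from Submodule.IsPrincipal.generator_mem S)
  have hkc : k ∣ (c : ℤ) := by simpa [hf] using hdvd 0
  -- gcd (a 0) k = 1
  have hgcd : Int.gcd (a 0) k = 1 := by
    have h0 : ((Int.gcd (a 0) k : ℤ)) ∣ a 0 := Int.gcd_dvd_left _ _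
    have hkk : ((Int.gcd (a 0) k : ℤ)) ∣ k := Int.gcd_dvd_right _ _
    have hai : ∀ i, ((Int.gcd (a 0) k : ℤ)) ∣ a i := by
      intro i
      by_cases h : i = 0
      · rw [h]; exact h0
      · exact hkk.trans (by simpa [hf, h] using hdvd i)
    have hcc : ((Int.gcd (a 0) k : ℤ)) ∣ (c : ℤ) := hkk.trans hkc
    have hh : ((Int.gcd (a 0) k : ℤ)) ∣ (c : ℤ) * M + ∑ i, m i * a i :=
      dvd_add (hcc.mul_right M)
        (Finset.dvd_sum fun i _ => dvd_mul_of_dvd_right (hai i) (m i))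
    have h1eq : (1 : ℤ) = (c : ℤ) * M + ∑ i, m i * a i := by linarith
    have : ((Int.gcd (a 0) k : ℤ)) ∣ 1 := by rw [h1eq]; exact hh
    exact_mod_cast Int.eq_one_of_dvd_one (by positivity) this
  have h5 : (a 0).natAbs = (β 0).val := by rw [ha]; exact Int.natAbs_natCast _
  have hcop : Nat.Coprime (β 0).val k.natAbs := by
    have := hgcd
    rw [Int.gcd, h5] at this
    exact this
  have hKc : k.natAbs ∣ c := by
    rw [← Int.natAbs_natCast c]
    exact Int.natAbs_dvd_natAbs.2 hkc
  obtain ⟨s, b, hbc, hb⟩ := lift_coprime hc hKc hcop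
  obtain ⟨s'', hs''⟩ : k ∣ (k.natAbs : ℤ) := Int.dvd_natAbs.2 dvd_rfl
  set s' : ℤ := s * s'' with hs'
  have hb' : (b : ℤ) = a 0 + s' * k := by
    rw [hb, hs'']
    simp only [ha, hs']
    ring
  -- the final coefficients
  set T : Fin d → ℤ := fun i => if i = 0 then 0 else s' * t i with hT
  have hT0 : T 0 = 0 := by simp [hT]
  refine ⟨T, hT0, b, hbc, ?_⟩
  have hsum : β 0 + ∑ i, T i • β i = ((a 0 + ∑ i, T i * a i : ℤ) : ZMod c) := by
    push_cast
    rw [hcast]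
    congr 1
    exact Finset.sum_congr rfl fun i _ => by rw [zsmul_eq_mul, hcast]
  have e1 : ∑ i, T i * a i = ∑ i ∈ Finset.univ.erase 0, T i * a i := by
    rw [← Finset.add_sum_erase Finset.univ (fun i => T i * a i) (Finset.mem_univ (0 : Fin d))]
    rw [hT0, zero_mul, zero_add]
  have e2 : ∀ i ∈ Finset.univ.erase (0 : Fin d), T i * a i = (s' * t i) * f i := by
    intro i hi
    have hne := Finset.ne_of_mem_erase hi
    rw [hT, hf]
    simp [if_neg hne]
  have e3 : (s' * t 0) * f 0 + ∑ i ∈ Finset.univ.erase 0, (s' * t i) * f i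
      = ∑ i, (s' * t i) * f i :=
    Finset.add_sum_erase Finset.univ (fun i => (s' * t i) * f i) (Finset.mem_univ (0 : Fin d))
  have e4 : ∑ i, (s' * t i) * f i = s' * k := by
    rw [← ht, Finset.mul_sum]
    exact Finset.sum_congr rfl fun i _ => by rw [smul_eq_mul]; ring
  have e5 : f 0 = (c : ℤ) := by rw [hf]; simp
  have hint : a 0 + ∑ i, T i * a i = (b : ℤ) - (s' * t 0) * c := by
    rw [e1, Finset.sum_congr rfl e2, hb']
    have : ∑ i ∈ Finset.univ.erase 0, (s' * t i) * f i = s' * k - (s' * t 0) * (c : ℤ) := by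
      rw [← e4, ← e3, e5]; ring
    rw [this]; ring
  rw [hsum, hint]
  push_cast
  simp [ZMod.natCast_self]

/-- Let `F` be a free group of finite rank `d` with basis `x_1, …, x_d` and let
`φ : F → ℤ/cℤ` be a surjective homomorphism (`c ≥ 1`). Then there is an automorphism `λ`
of `F` such that `φ(λ(x_1))` generates `ℤ/cℤ`. -/
theorem stmt2 (d : ℕ) (hd : 0 < d) (c : ℕ) (hc : 0 < c)
    (φ : FreeGroup (Fin d) →* Multiplicative (ZMod c))
    (hφ : Function.Surjective φ) :
    ∃ lam : FreeGroup (Fin d) ≃* FreeGroup (Fin d),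
      Subgroup.zpowers (φ (lam (FreeGroup.of ⟨0, hd⟩))) = ⊤ := by
  haveI : NeZero d := ⟨hd.ne'⟩
  haveI : NeZero c := ⟨hc.ne'⟩
  have hi0 : (⟨0, hd⟩ : Fin d) = 0 := by ext; simp
  rw [hi0]
  set β : Fin d → ZMod c := fun i => Multiplicative.toAdd (φ (FreeGroup.of i)) with hβ
  -- 1 lies in the ℤ-span of the β i
  have h1 : (1 : ZMod c) ∈ Submodule.span ℤ (Set.range β) := by
    obtain ⟨u, hu⟩ := hφ (Multiplicative.ofAdd 1)
    set N := Submodule.span ℤ (Set.range β) with hN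
    set Sgrp : Subgroup (Multiplicative (ZMod c)) := AddSubgroup.toSubgroup N.toAddSubgroup
      with hSgrp
    have hmem : ∀ g, φ g ∈ Sgrp := by
      have htop : Sgrp.comap φ = ⊤ := by
        rw [eq_top_iff, ← FreeGroup.closure_range_of (Fin d)]
        apply (Subgroup.closure_le _).2
        rintro _ ⟨i, rfl⟩
        show φ (FreeGroup.of i) ∈ Sgrp
        show Multiplicative.toAdd (φ (FreeGroup.of i)) ∈ N.toAddSubgroup
        rw [Submodule.mem_toAddSubgroup]
        exact Submodule.subset_span ⟨i, rfl⟩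
      intro g
      have : g ∈ Sgrp.comap φ := by rw [htop]; trivial
      exact this
    have h2 := hmem u
    rw [hu] at h2
    have h3 : Multiplicative.toAdd (Multiplicative.ofAdd (1 : ZMod c)) ∈ N.toAddSubgroup := h2
    rwa [toAdd_ofAdd, Submodule.mem_toAddSubgroup] at h3
  obtain ⟨T, hT0, b, hbc, hval⟩ := key hc β h1
  -- build the automorphism
  set w : FreeGroup (Fin d) := ((List.finRange d).map (fun i => FreeGroup.of i ^ T i)).prod
    with hw
  set F1 : FreeGroup (Fin d) →* FreeGroup (Fin d) :=
    FreeGroup.lift (fun i => if i = 0 then FreeGroup.of 0 * w else FreeGroup.of i) with hF1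
  set F2 : FreeGroup (Fin d) →* FreeGroup (Fin d) :=
    FreeGroup.lift (fun i => if i = 0 then FreeGroup.of 0 * w⁻¹ else FreeGroup.of i) with hF2
  have hfix : ∀ (h : FreeGroup (Fin d) →* FreeGroup (Fin d)),
      (∀ i, i ≠ 0 → h (FreeGroup.of i) = FreeGroup.of i) → h w = w := by
    intro h hh
    rw [hw, map_list_prod, List.map_map]
    congr 1
    apply List.map_congr_left
    intro i _
    by_cases hi0 : i = 0
    · subst hi0
      simp only [Function.comp_apply, hT0, zpow_zero, map_one]
    · simp only [Function.comp_apply, map_zpow, hh i hi0]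
  have hF1ne : ∀ i, i ≠ (0 : Fin d) → F1 (FreeGroup.of i) = FreeGroup.of i := by
    intro i hi; rw [hF1, FreeGroup.lift_apply_of, if_neg hi]
  have hF2ne : ∀ i, i ≠ (0 : Fin d) → F2 (FreeGroup.of i) = FreeGroup.of i := by
    intro i hi; rw [hF2, FreeGroup.lift_apply_of, if_neg hi]
  have hw1 : F1 w = w := hfix F1 hF1ne
  have hw2 : F2 w = w := hfix F2 hF2ne
  have hF10 : F1 (FreeGroup.of 0) = FreeGroup.of 0 * w := by
    rw [hF1, FreeGroup.lift_apply_of, if_pos rfl]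
  have hF20 : F2 (FreeGroup.of 0) = FreeGroup.of 0 * w⁻¹ := by
    rw [hF2, FreeGroup.lift_apply_of, if_pos rfl]
  have hcomp1 : F2.comp F1 = MonoidHom.id _ := by
    apply FreeGroup.ext_hom
    intro i
    by_cases hi0 : i = 0
    · subst hi0
      rw [MonoidHom.comp_apply, hF10, map_mul, hF20, hw2, MonoidHom.id_apply,
        mul_assoc, inv_mul_cancel, mul_one]
    · rw [MonoidHom.comp_apply, hF1ne i hi0, hF2ne i hi0, MonoidHom.id_apply]
  have hcomp2 : F1.comp F2 = MonoidHom.id _ := by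
    apply FreeGroup.ext_hom
    intro i
    by_cases hi0 : i = 0
    · subst hi0
      rw [MonoidHom.comp_apply, hF20, map_mul, hF10, map_inv, hw1, MonoidHom.id_apply,
        mul_assoc, mul_inv_cancel, mul_one]
    · rw [MonoidHom.comp_apply, hF2ne i hi0, hF1ne i hi0, MonoidHom.id_apply]
  refine ⟨MonoidHom.toMulEquiv F1 F2 hcomp1 hcomp2, ?_⟩
  have happ : (MonoidHom.toMulEquiv F1 F2 hcomp1 hcomp2) (FreeGroup.of 0)
      = FreeGroup.of 0 * w := hF10
  rw [happ]
  have hφw : φ (FreeGroup.of 0 * w) = Multiplicative.ofAdd (β 0 + ∑ i, T i • β i) := by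
    have hpw : φ w = ∏ i, (φ (FreeGroup.of i)) ^ T i := by
      rw [hw, map_list_prod, List.map_map, Fin.prod_univ_def]
      congr 1
      apply List.map_congr_left
      intro i _
      exact map_zpow φ _ _
    apply Multiplicative.toAdd.injective
    rw [map_mul, toAdd_mul, hpw, toAdd_prod, toAdd_ofAdd]
    congr 1
  rw [hφw, hval]
  exact gen_of_isUnit ((ZMod.isUnit_iff_coprime b c).2 hbc)
end

section
/- Let f ∈ ℤ[X]. The set S(f) of primes p such that f has a root modulo p is finite if and only if f is a nonzero constant polynomial. -/
open Polynomial

/-- For `f ∈ ℤ[X]`, the set of primes `p` such that `f` has a root modulo `p` is finite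
if and only if `f` is a nonzero constant polynomial. -/
theorem stmt3 (f : Polynomial ℤ) :
    {p : ℕ | p.Prime ∧ ∃ n : ℤ, (p : ℤ) ∣ f.eval n}.Finite ↔
      ∃ a : ℤ, a ≠ 0 ∧ f = Polynomial.C a := by
  constructor
  · intro hS
    -- Step 1: f has no integer root
    have hne : ∀ n : ℤ, f.eval n ≠ 0 := by
      intro n hn
      have hsub : {p : ℕ | p.Prime} ⊆ {p : ℕ | p.Prime ∧ ∃ n : ℤ, (p : ℤ) ∣ f.eval n} := by
        intro p hp
        exact ⟨hp, n, hn ▸ dvd_zero _⟩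
      exact (hS.subset hsub).not_infinite Nat.infinite_setOf_prime
    set c := f.coeff 0 with hc
    have hc0 : c ≠ 0 := by
      have := hne 0
      rwa [← Polynomial.coeff_zero_eq_eval_zero] at this
    refine ⟨c, hc0, ?_⟩
    by_contra hfc
    have hdeg : 0 < f.natDegree := by
      rcases Nat.eq_zero_or_pos f.natDegree with h | h
      · exact absurd (f.eq_C_of_natDegree_eq_zero h) hfc
      · exact h
    set K : ℕ := ∏ p ∈ hS.toFinset, p with hK
    have hKpos : 0 < K := by
      apply Finset.prod_pos
      intro p hp
      have := (hS.mem_toFinset.mp hp).1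
      exact this.pos
    have heval : ∀ x : ℤ, f.eval x = f.divX.eval x * x + c := by
      intro x
      conv_lhs => rw [← Polynomial.divX_mul_X_add f]
      simp [hc]
    -- the set of x where f takes value c or -c is finite
    have hT : {x : ℤ | f.eval x = c ∨ f.eval x = -c}.Finite := by
      have h1 : (f - C c) ≠ 0 := by
        intro h
        exact hfc (sub_eq_zero.mp h)
      have h2 : (f + C c) ≠ 0 := by
        intro h
        have hfeq : f = C (-c) := by rw [map_neg, eq_neg_of_add_eq_zero_left h]
        rw [hfeq] at hdeg
        simp at hdeg
      have := (Polynomial.finite_setOf_isRoot h1).union (Polynomial.finite_setOf_isRoot h2)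
      apply this.subset
      rintro x (hx | hx)
      · left; simp [IsRoot, hx]
      · right; simp [IsRoot, hx]
    -- pick m with K*c*m outside that set
    have hinj : Function.Injective (fun m : ℤ => (K : ℤ) * c * m) := by
      intro a b h
      have hKc : (K : ℤ) * c ≠ 0 := mul_ne_zero (by exact_mod_cast hKpos.ne') hc0
      exact mul_left_cancel₀ hKc h
    have hT' : ((fun m : ℤ => (K : ℤ) * c * m) ⁻¹' {x : ℤ | f.eval x = c ∨ f.eval x = -c}).Finite :=
      hT.preimage hinj.injOn
    obtain ⟨m, hm⟩ := hT'.infinite_compl.nonempty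
    set x : ℤ := (K : ℤ) * c * m with hx
    set t : ℤ := f.divX.eval x * ((K : ℤ) * m) + 1 with ht
    have hft : f.eval x = c * t := by
      rw [heval x, ht, hx]; ring
    have ht1 : t ≠ 1 := by
      intro h
      apply hm
      left
      show f.eval x = c
      rw [hft, h, mul_one]
    have ht1' : t ≠ -1 := by
      intro h
      apply hm
      right
      show f.eval x = -c
      rw [hft, h]; ring
    have htabs : t.natAbs ≠ 1 := by
      intro h
      rcases Int.natAbs_eq_iff.mp h with h | h
      · exact ht1 (by exact_mod_cast h)
      · exact ht1' (by exact_mod_cast h)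
    obtain ⟨q, hq, hqt⟩ := Int.exists_prime_and_dvd htabs
    set p : ℕ := q.natAbs with hp
    have hpp : p.Prime := Int.prime_iff_natAbs_prime.mp hq
    have hpt : (p : ℤ) ∣ t := (Int.natAbs_dvd).mpr hqt
    have hpS : p ∈ hS.toFinset := by
      rw [hS.mem_toFinset]
      exact ⟨hpp, x, hft ▸ hpt.mul_left c⟩
    have hpK : (p : ℤ) ∣ (K : ℤ) := by
      exact_mod_cast Int.natCast_dvd_natCast.mpr (Finset.dvd_prod_of_mem _ hpS)
    have : (p : ℤ) ∣ 1 := by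
      have h1 : (p : ℤ) ∣ f.divX.eval x * ((K : ℤ) * m) :=
        Dvd.dvd.mul_left (hpK.mul_right m) _
      have := dvd_sub hpt h1
      simpa [ht] using this
    have := Int.le_of_dvd one_pos this
    have := hpp.two_le
    omega
  · rintro ⟨a, ha, rfl⟩
    apply Set.Finite.subset (a.natAbs.divisors : Finset ℕ).finite_toSet
    rintro p ⟨hp, n, hn⟩
    simp only [Polynomial.eval_C] at hn
    rw [Finset.mem_coe, Nat.mem_divisors]
    constructor
    · have := Int.natAbs_dvd_natAbs.mpr hn
      simpa using this
    · simpa using ha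
end

section
/- Let f ∈ ℤ[X] be a nonconstant polynomial with nonzero constant term a_0. For every nonzero integer t, there exist a prime p with gcd(t, p) = 1 and an integer n such that f(n) ≡ 0 mod p. -/
/-- Let `f ∈ ℤ[X]` be nonconstant with nonzero constant term. Then for every nonzero
integer `t` there exist a prime `p` coprime to `t` and an integer `n` with
`f(n) ≡ 0 mod p`. -/
theorem stmt4 (f : Polynomial ℤ) (hdeg : 0 < f.natDegree) (h0 : f.coeff 0 ≠ 0)
    (t : ℤ) (ht : t ≠ 0) :
    ∃ (p : ℕ) (n : ℤ), p.Prime ∧ Int.gcd t (p : ℤ) = 1 ∧ (p : ℤ) ∣ f.eval n := by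
  set a := f.coeff 0 with ha
  have hat : a * t ≠ 0 := mul_ne_zero h0 ht
  set g : Polynomial ℤ := f.comp (Polynomial.C (a*t) * Polynomial.X) with hg
  have hgeval : ∀ x : ℤ, g.eval x = f.eval (a*t*x) := by
    intro x; simp [hg]
  have hgdeg : 0 < g.natDegree := by
    rw [hg, Polynomial.natDegree_comp, Polynomial.natDegree_C_mul hat, Polynomial.natDegree_X,
      mul_one]
    exact hdeg
  have hne : ∀ c : ℤ, g - Polynomial.C c ≠ 0 := by
    intro c h
    have : (g - Polynomial.C c).natDegree = g.natDegree := Polynomial.natDegree_sub_C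
    rw [h] at this
    simp at this
    omega
  have hfin : (({x | (g - Polynomial.C 0).IsRoot x} ∪ {x | (g - Polynomial.C a).IsRoot x}
      ∪ {x | (g - Polynomial.C (-a)).IsRoot x}) : Set ℤ).Finite :=
    ((Polynomial.finite_setOf_isRoot (hne 0)).union
      (Polynomial.finite_setOf_isRoot (hne a))).union
      (Polynomial.finite_setOf_isRoot (hne (-a)))
  obtain ⟨x, hx⟩ := (Set.Finite.infinite_compl hfin).nonempty
  simp only [Set.mem_compl_iff, Set.mem_union, not_or, Set.mem_setOf_eq,
    Polynomial.IsRoot, Polynomial.eval_sub, Polynomial.eval_C, sub_eq_zero, Polynomial.map_zero,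
    Polynomial.eval_zero] at hx
  obtain ⟨⟨hx0, hxa⟩, hxna⟩ := hx
  rw [hgeval] at hx0 hxa hxna
  -- f.eval (a*t*x) = a * (1 + t*x*k)
  have hdvd : (a*t*x - 0) ∣ f.eval (a*t*x) - f.eval 0 := Polynomial.sub_dvd_eval_sub _ _ f
  rw [sub_zero, ← Polynomial.coeff_zero_eq_eval_zero, ← ha] at hdvd
  obtain ⟨k, hk⟩ := hdvd
  have hfe : f.eval (a*t*x) = a * (1 + t*x*k) := by
    have : f.eval (a*t*x) = a + a*t*x*k := by omega
    rw [this]; ring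
  set N : ℤ := 1 + t*x*k with hN
  have hN1 : N ≠ 1 := by
    intro h
    apply hxa
    rw [hfe, h, mul_one]
  have hNn1 : N ≠ -1 := by
    intro h
    apply hxna
    rw [hfe, h]; ring
  have hN0 : N ≠ 0 := by
    intro h
    apply hx0
    rw [hfe, h, mul_zero]
  obtain ⟨p, hp, hpN⟩ := Int.exists_prime_and_dvd (n := N) (by omega)
  have hq : Prime ((p.natAbs : ℤ)) := by
    rwa [Int.prime_iff_natAbs_prime, Int.natAbs_natCast, ← Int.prime_iff_natAbs_prime]
  have hqN : (p.natAbs : ℤ) ∣ N := (Int.natAbs_dvd).mpr hpN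
  refine ⟨p.natAbs, a*t*x, Int.prime_iff_natAbs_prime.mp hp, ?_, ?_⟩
  · rw [← Int.isCoprime_iff_gcd_eq_one]
    refine ((Prime.coprime_iff_not_dvd hq).mpr ?_).symm
    intro hdt
    have h1 : (p.natAbs : ℤ) ∣ 1 := by
      have : (p.natAbs : ℤ) ∣ t*(x*k) := hdt.mul_right _
      have hd2 : (p.natAbs : ℤ) ∣ N - t*(x*k) := dvd_sub hqN this
      have he : N - t*(x*k) = 1 := by rw [hN]; ring
      rwa [he] at hd2
    exact hq.not_unit (isUnit_of_dvd_one h1)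
  · rw [hfe]
    exact Dvd.dvd.mul_left hqN a
end

section
/- A finite group G is primitive and supersolvable if and only if G is isomorphic to a semidirect product (ℤ/pℤ) ⋊ C for some prime p and some subgroup C of Aut(ℤ/pℤ). -/
/-- A finite group is primitive if it has a maximal subgroup with trivial core. -/
def IsPrimitiveGroup (G : Type*) [Group G] : Prop :=
  ∃ M : Subgroup G, IsCoatom M ∧ M.normalCore = ⊥

/-- A group is supersolvable if it has a chain `⊥ = H_0 ≤ H_1 ≤ ⋯ ≤ H_k = ⊤` of subgroups,
each normal in `G`, with all successive factors cyclic (i.e. `H_{i+1} = H_i ⊔ ⟨g⟩` for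
some `g`). -/
def IsSupersolvableGroup (G : Type*) [Group G] : Prop :=
  ∃ (k : ℕ) (H : Fin (k + 1) → Subgroup G),
    H 0 = ⊥ ∧ H (Fin.last k) = ⊤ ∧
    (∀ i : Fin (k + 1), (H i).Normal) ∧
    (∀ i : Fin k, ∃ g : G, H i.succ = H i.castSucc ⊔ Subgroup.zpowers g)

def addAutToMulAut (A : Type*) [AddGroup A] : Multiplicative (AddAut A) →* MulAut (Multiplicative A) where
  toFun f := AddEquiv.toMultiplicative f.toAdd
  map_one' := rfl
  map_mul' _ _ := rfl

/-- The natural action of `C ≤ Aut(ℤ/pℤ) ≅ (ℤ/pℤ)ˣ` on `ℤ/pℤ`. -/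
def unitAct (p : ℕ) : (ZMod p)ˣ →* MulAut (Multiplicative (ZMod p)) :=
  (addAutToMulAut _).comp (DistribMulAction.toAddAut (ZMod p)ˣ (ZMod p))

open Subgroup SemidirectProduct

section Transport

variable {G H : Type*} [Group G] [Group H]

theorem normalCore_map (e : G ≃* H) (M : Subgroup G) :
    (M.map (e : G →* H)).normalCore = M.normalCore.map (e : G →* H) := by
  ext x
  constructor
  · intro hx
    refine ⟨e.symm x, fun b => ?_, by simp⟩
    obtain ⟨m, hm, hme⟩ := hx (e b)
    have hx2 : b * e.symm x * b⁻¹ = e.symm (e b * x * (e b)⁻¹) := by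
      simp [map_mul]
    rw [hx2, ← hme]
    simpa using hm
  · rintro ⟨y, hy, rfl⟩ b
    refine ⟨e.symm b * y * (e.symm b)⁻¹, hy _, by simp [map_mul]⟩

theorem IsPrimitiveGroup.of_mulEquiv (e : G ≃* H) (h : IsPrimitiveGroup G) :
    IsPrimitiveGroup H := by
  obtain ⟨M, hM, hcore⟩ := h
  refine ⟨M.map (e : G →* H), ?_, ?_⟩
  · exact (e.mapSubgroup.isCoatom_iff M).2 hM
  · rw [normalCore_map, hcore, Subgroup.map_bot]

theorem IsSupersolvableGroup.of_mulEquiv (e : G ≃* H) (h : IsSupersolvableGroup G) :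
    IsSupersolvableGroup H := by
  obtain ⟨k, Hc, h0, htop, hnorm, hstep⟩ := h
  refine ⟨k, fun i => (Hc i).map (e : G →* H), ?_, ?_, ?_, ?_⟩
  · show (Hc 0).map (e : G →* H) = ⊥
    rw [h0, Subgroup.map_bot]
  · show (Hc (Fin.last k)).map (e : G →* H) = ⊤
    rw [htop]; exact Subgroup.map_top_of_surjective _ e.surjective
  · intro i; exact Subgroup.Normal.map (hnorm i) _ e.surjective
  · intro i
    obtain ⟨g, hg⟩ := hstep i
    refine ⟨e g, ?_⟩
    show (Hc i.succ).map (e : G →* H) = (Hc i.castSucc).map (e : G →* H) ⊔ _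
    rw [hg, Subgroup.map_sup, MonoidHom.map_zpowers]
    rfl

end Transport

section SDP

variable {N : Type*} {Gr : Type*} [Group N] [Group Gr] {φ : Gr →* MulAut N}

theorem sdp_mem_range_inr_iff (x : N ⋊[φ] Gr) :
    x ∈ (inr : Gr →* N ⋊[φ] Gr).range ↔ x.left = 1 := by
  constructor
  · rintro ⟨c, rfl⟩; rfl
  · intro h
    exact ⟨x.right, by ext <;> simp [h]⟩

theorem sdp_range_inl_sup_range_inr :
    (inl : N →* N ⋊[φ] Gr).range ⊔ (inr : Gr →* N ⋊[φ] Gr).range = ⊤ := by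
  rw [eq_top_iff]
  rintro ⟨n, g⟩ -
  rw [show (⟨n, g⟩ : N ⋊[φ] Gr) = inl n * inr g from mk_eq_inl_mul_inr g n]
  exact mul_mem (le_sup_left (α := Subgroup (N ⋊[φ] Gr)) ⟨n, rfl⟩)
    (le_sup_right (α := Subgroup (N ⋊[φ] Gr)) ⟨g, rfl⟩)

end SDP

section Semidirect

variable {p : ℕ} (hp : p.Prime) (C : Subgroup (ZMod p)ˣ)

theorem unitAct_apply_ofAdd (u : (ZMod p)ˣ) (a : ZMod p) :
    unitAct p u (Multiplicative.ofAdd a) = Multiplicative.ofAdd ((u : ZMod p) * a) := rfl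

include hp

theorem primitive_sdp :
    IsPrimitiveGroup (Multiplicative (ZMod p) ⋊[(unitAct p).comp C.subtype] C) := by
  haveI := Fact.mk hp
  haveI : Fact (1 < p) := ⟨hp.one_lt⟩
  set φ := (unitAct p).comp C.subtype
  refine ⟨(inr : C →* _ ⋊[φ] C).range, ⟨?_, ?_⟩, ?_⟩
  · -- not top
    intro htop
    have h1 : (inl (Multiplicative.ofAdd (1 : ZMod p)) : _ ⋊[φ] C) ∈
        (inr : C →* _ ⋊[φ] C).range := htop ▸ Subgroup.mem_top _
    rw [sdp_mem_range_inr_iff] at h1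
    simp only [left_inl] at h1
    exact one_ne_zero ((Multiplicative.ofAdd.injective h1 : (1 : ZMod p) = 0))
  · -- maximal
    intro K hK
    obtain ⟨w, hwK, hwM⟩ := SetLike.exists_of_lt hK
    have hinrK : (inr : C →* _ ⋊[φ] C).range ≤ K := hK.le
    have hinl : (inl w.left : _ ⋊[φ] C) ∈ K := by
      have : w * inr w.right⁻¹ ∈ K := K.mul_mem hwK (hinrK ⟨w.right⁻¹, rfl⟩)
      have hw : w * inr w.right⁻¹ = inl w.left := by
        ext <;> simp
      rwa [hw] at this
    have hwl : w.left ≠ 1 := by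
      intro h
      exact hwM ((sdp_mem_range_inr_iff w).2 h)
    -- range inl ≤ K
    have hNK : (inl : Multiplicative (ZMod p) →* _ ⋊[φ] C).range ≤ K := by
      rintro - ⟨b, rfl⟩
      set y := Multiplicative.toAdd w.left with hy
      have hy0 : y ≠ 0 := fun h => hwl (by
        rw [← ofAdd_toAdd w.left, ← hy, h]; rfl)
      set z := Multiplicative.toAdd b
      have hz : (z * y⁻¹).val • y = z := by
        rw [nsmul_eq_mul, ZMod.natCast_val, ZMod.cast_id, mul_assoc,
          inv_mul_cancel₀ hy0, mul_one]
      have : inl b = (inl w.left : _ ⋊[φ] C) ^ (z * y⁻¹).val := by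
        rw [← map_pow]
        congr 1
        rw [show w.left = Multiplicative.ofAdd y from (ofAdd_toAdd w.left).symm,
          ← ofAdd_nsmul, hz]
        exact (ofAdd_toAdd b).symm
      rw [this]
      exact K.pow_mem hinl _
    rw [eq_top_iff, ← sdp_range_inl_sup_range_inr]
    exact sup_le hNK hinrK
  · -- trivial core
    rw [eq_bot_iff]
    intro w hw
    have hwM : w ∈ (inr : C →* _ ⋊[φ] C).range := Subgroup.normalCore_le _ hw
    rw [sdp_mem_range_inr_iff] at hwM
    set c := w.right with hc
    have hconj := hw (inl (Multiplicative.ofAdd (1 : ZMod p)))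
    rw [sdp_mem_range_inr_iff] at hconj
    have hleft : (inl (Multiplicative.ofAdd (1 : ZMod p)) * w *
        (inl (Multiplicative.ofAdd (1 : ZMod p)))⁻¹).left
        = Multiplicative.ofAdd (1 - ((c : (ZMod p)ˣ) : ZMod p)) := by
      have hwc : w = inr c := by
        ext
        · exact hwM
        · rfl
      rw [hwc]
      simp only [mul_left, mul_right, inv_left, inv_right, left_inl, right_inl, left_inr,
        right_inr, map_one, inv_one, MulAut.one_apply, one_mul, mul_one]
      have ht : (Multiplicative.ofAdd (1 : ZMod p))⁻¹ = Multiplicative.ofAdd (-1 : ZMod p) :=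
        (ofAdd_neg _).symm
      rw [ht]
      show Multiplicative.ofAdd (1 : ZMod p) * unitAct p (c : (ZMod p)ˣ)
        (Multiplicative.ofAdd (-1 : ZMod p)) = _
      rw [unitAct_apply_ofAdd, ← ofAdd_add]
      congr 1
      ring
    rw [hleft] at hconj
    have hc1 : ((c : (ZMod p)ˣ) : ZMod p) = 1 := by
      have h2 : (1 : ZMod p) - ((c : (ZMod p)ˣ) : ZMod p) = 0 :=
        Multiplicative.ofAdd.injective hconj
      exact (sub_eq_zero.mp h2).symm
    have hcu : (c : (ZMod p)ˣ) = 1 := Units.ext hc1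
    have hc' : c = 1 := Subtype.ext hcu
    have : w = 1 := SemidirectProduct.ext hwM hc'
    rw [this]; exact Subgroup.one_mem _

theorem supersolvable_sdp :
    IsSupersolvableGroup (Multiplicative (ZMod p) ⋊[(unitAct p).comp C.subtype] C) := by
  haveI := Fact.mk hp
  set φ := (unitAct p).comp C.subtype
  haveI : IsCyclic C := Subgroup.isCyclic C
  obtain ⟨c₀, hc₀⟩ := (inferInstance : IsCyclic C)
  have hrange_inl : (inl : Multiplicative (ZMod p) →* _ ⋊[φ] C).range =
      Subgroup.zpowers (inl (Multiplicative.ofAdd (1 : ZMod p))) := by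
    apply le_antisymm
    · rintro - ⟨b, rfl⟩
      have : inl b = (inl (Multiplicative.ofAdd (1 : ZMod p)) : _ ⋊[φ] C)
          ^ (Multiplicative.toAdd b).val := by
        rw [← map_pow]
        congr 1
        rw [← ofAdd_nsmul, nsmul_eq_mul, mul_one, ZMod.natCast_val, ZMod.cast_id]
        exact (ofAdd_toAdd b).symm
      rw [this]
      exact Subgroup.pow_mem _ (Subgroup.mem_zpowers _) _
    · rw [Subgroup.zpowers_le]
      exact ⟨_, rfl⟩
  refine ⟨2, ![⊥, (inl : Multiplicative (ZMod p) →* Multiplicative (ZMod p) ⋊[φ] C).range, ⊤],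
    rfl, rfl, ?_, ?_⟩
  · intro i
    fin_cases i
    · show (⊥ : Subgroup (Multiplicative (ZMod p) ⋊[φ] C)).Normal
      infer_instance
    · show ((inl : Multiplicative (ZMod p) →* _ ⋊[φ] C).range).Normal
      rw [range_inl_eq_ker_rightHom]
      exact MonoidHom.normal_ker _
    · show (⊤ : Subgroup (Multiplicative (ZMod p) ⋊[φ] C)).Normal
      infer_instance
  · intro i
    fin_cases i
    · refine ⟨inl (Multiplicative.ofAdd (1 : ZMod p)), ?_⟩
      show (inl : Multiplicative (ZMod p) →* _ ⋊[φ] C).range = ⊥ ⊔ _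
      rw [bot_sup_eq, hrange_inl]
    · refine ⟨inr c₀, ?_⟩
      show (⊤ : Subgroup (_ ⋊[φ] C)) = (inl : Multiplicative (ZMod p) →* _ ⋊[φ] C).range ⊔ _
      apply le_antisymm _ le_top
      rw [← sdp_range_inl_sup_range_inr]
      apply sup_le le_sup_left
      rintro - ⟨c, rfl⟩
      obtain ⟨k, hk⟩ := hc₀ c
      have hmem : (inr c : Multiplicative (ZMod p) ⋊[φ] C) ∈
          Subgroup.zpowers (inr c₀ : Multiplicative (ZMod p) ⋊[φ] C) := by
        rw [← hk, map_zpow]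
        exact Subgroup.zpow_mem _ (Subgroup.mem_zpowers _) _
      exact le_sup_right (α := Subgroup (Multiplicative (ZMod p) ⋊[φ] C)) hmem

end Semidirect


section Forward

def multAutMulEquiv (A : Type*) [AddGroup A] : Multiplicative (AddAut A) ≃* MulAut (Multiplicative A) :=
  { (Multiplicative.toAdd.trans AddEquiv.toMultiplicative :
      Multiplicative (AddAut A) ≃ MulAut (Multiplicative A)) with map_mul' := fun _ _ => rfl }

variable {G : Type*} [Group G] [Finite G]

theorem exists_cyclic_normal (hss : IsSupersolvableGroup G) (hnt : (⊤ : Subgroup G) ≠ ⊥) :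
    ∃ g : G, g ≠ 1 ∧ (Subgroup.zpowers g).Normal := by
  obtain ⟨k, H, h0, htop, hnorm, hstep⟩ := hss
  suffices h : ∀ n : ℕ, ∀ hn : n < k + 1, H ⟨n, hn⟩ ≠ ⊥ →
      ∃ g : G, g ≠ 1 ∧ (Subgroup.zpowers g).Normal by
    refine h k k.lt_succ_self ?_
    have hlast : (⟨k, k.lt_succ_self⟩ : Fin (k + 1)) = Fin.last k := rfl
    rw [hlast, htop]; exact hnt
  intro n
  induction n with
  | zero =>
    intro hn hne
    refine absurd ?_ hne
    rw [show (⟨0, hn⟩ : Fin (k + 1)) = 0 from Fin.ext (Fin.val_zero _).symm, h0]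
  | succ m ih =>
    intro hn hne
    have hmk : m < k := by omega
    have hm1 : m < k + 1 := by omega
    by_cases hm : H ⟨m, hm1⟩ = ⊥
    · obtain ⟨g, hg⟩ := hstep ⟨m, hmk⟩
      have hsucc : (⟨m, hmk⟩ : Fin k).succ = ⟨m + 1, hn⟩ := rfl
      have hcast : (⟨m, hmk⟩ : Fin k).castSucc = ⟨m, hm1⟩ := rfl
      rw [hsucc, hcast, hm, bot_sup_eq] at hg
      refine ⟨g, ?_, hg ▸ hnorm _⟩
      intro h1
      rw [h1, Subgroup.zpowers_one_eq_bot] at hg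
      exact hne hg
    · exact ih hm1 hm

theorem exists_prime_order_normal (hss : IsSupersolvableGroup G)
    (hnt : (⊤ : Subgroup G) ≠ ⊥) :
    ∃ (p : ℕ) (x : G), p.Prime ∧ orderOf x = p ∧ (Subgroup.zpowers x).Normal := by
  obtain ⟨g, hg1, hgn⟩ := exists_cyclic_normal hss hnt
  have hm1 : orderOf g ≠ 1 := fun h => hg1 (orderOf_eq_one_iff.mp h)
  have hp : (orderOf g).minFac.Prime := Nat.minFac_prime hm1
  have hpm : (orderOf g).minFac ∣ orderOf g := Nat.minFac_dvd _
  have hm0 : orderOf g ≠ 0 := (orderOf_pos g).ne'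
  refine ⟨(orderOf g).minFac, g ^ (orderOf g / (orderOf g).minFac), hp, ?_, ?_⟩
  · rw [orderOf_pow, Nat.gcd_eq_right (Nat.div_dvd_of_dvd hpm), Nat.div_div_self hpm hm0]
  · have hxord : orderOf (g ^ (orderOf g / (orderOf g).minFac)) = (orderOf g).minFac := by
      rw [orderOf_pow, Nat.gcd_eq_right (Nat.div_dvd_of_dvd hpm), Nat.div_div_self hpm hm0]
    set p := (orderOf g).minFac
    set x := g ^ (orderOf g / p) with hxdef
    have hxp : x ^ p = 1 := by rw [← hxord, pow_orderOf_eq_one]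
    constructor
    intro y hy c
    obtain ⟨s, hs⟩ := Subgroup.mem_zpowers_iff.mp hy
    have hyg : y ∈ Subgroup.zpowers g := by
      rw [← hs]
      exact Subgroup.zpow_mem _ (Subgroup.pow_mem _ (Subgroup.mem_zpowers g) _) _
    have hcy : c * y * c⁻¹ ∈ Subgroup.zpowers g := hgn.conj_mem y hyg c
    obtain ⟨t, ht⟩ := Subgroup.mem_zpowers_iff.mp hcy
    have hyp : y ^ (p : ℤ) = 1 := by
      rw [← hs, ← zpow_mul, mul_comm, zpow_mul, zpow_natCast, hxp, one_zpow]
    have hconj : c * y ^ (p : ℤ) * c⁻¹ = (c * y * c⁻¹) ^ (p : ℤ) := by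
      simpa [MulAut.conj_apply] using
        (map_zpow (MulAut.conj c).toMonoidHom y (p : ℤ)).symm
    have hgt : g ^ (t * p) = 1 := by
      rw [zpow_mul, ht, ← hconj, hyp, mul_one, mul_inv_cancel]
    have hdvd : (orderOf g : ℤ) ∣ t * p := orderOf_dvd_iff_zpow_eq_one.mpr hgt
    have hmfact : (orderOf g : ℤ) = (p : ℤ) * ((orderOf g / p : ℕ) : ℤ) := by
      rw [← Nat.cast_mul, Nat.mul_div_cancel' hpm]
    have hdvd2 : ((orderOf g / p : ℕ) : ℤ) ∣ t := by
      have hp0 : (p : ℤ) ≠ 0 := Int.natCast_ne_zero.mpr hp.pos.ne'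
      have h2 : (p : ℤ) * ((orderOf g / p : ℕ) : ℤ) ∣ (p : ℤ) * t := by
        rw [← hmfact, mul_comm (p : ℤ) t]
        exact hdvd
      exact (mul_dvd_mul_iff_left hp0).mp h2
    obtain ⟨s', hs'⟩ := hdvd2
    rw [Subgroup.mem_zpowers_iff]
    refine ⟨s', ?_⟩
    rw [hxdef, ← zpow_natCast g, ← zpow_mul, ← hs', ht]

theorem forward_dir (hprim : IsPrimitiveGroup G) (hss : IsSupersolvableGroup G) :
    ∃ (p : ℕ) (_ : p.Prime) (C : Subgroup (ZMod p)ˣ),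
      Nonempty (G ≃* Multiplicative (ZMod p) ⋊[(unitAct p).comp C.subtype] C) := by
  obtain ⟨M, hM, hcore⟩ := hprim
  have hnt : (⊤ : Subgroup G) ≠ ⊥ := by
    intro h
    exact hM.1 (le_antisymm le_top (h.le.trans bot_le))
  obtain ⟨p, x, hp, hx, hN⟩ := exists_prime_order_normal hss hnt
  haveI := Fact.mk hp
  haveI := hN
  set N := Subgroup.zpowers x with hNdef
  have hx1 : x ≠ 1 := by
    intro h; rw [h, orderOf_one] at hx; exact hp.one_lt.ne' hx.symm
  have hNM : ¬ N ≤ M := by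
    intro hle
    have h2 : N ≤ M.normalCore := Subgroup.normal_le_normalCore.mpr hle
    rw [hcore] at h2
    exact hx1 (Subgroup.mem_bot.mp (h2 (Subgroup.mem_zpowers x)))
  have hsup : N ⊔ M = ⊤ :=
    hM.2 _ (lt_of_le_of_ne le_sup_right fun h => hNM (le_sup_left.trans h.ge))
  have hcardN : Nat.card ↥N = p := by rw [hNdef, Nat.card_zpowers, hx]
  have hinf : N ⊓ M = ⊥ := by
    have hd := Subgroup.card_dvd_of_le (inf_le_left : N ⊓ M ≤ N)
    rw [hcardN] at hd
    rcases hp.eq_one_or_self_of_dvd _ hd with h1 | hP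
    · exact Subgroup.card_eq_one.mp h1
    · exfalso
      have h2 : N ⊓ M = N := Subgroup.eq_of_le_of_card_ge inf_le_left (by rw [hcardN, hP])
      exact hNM (h2 ▸ inf_le_right)
  have hcardZ : Nat.card (Multiplicative (ZMod p)) = p := by
    rw [Nat.card_congr Multiplicative.toAdd, Nat.card_zmod]
  let e : ↥N ≃* Multiplicative (ZMod p) := mulEquivOfPrimeCardEq hcardN hcardZ
  let A : ↥M →* MulAut ↥N := MulAut.conjNormal.comp M.subtype
  let Γ : MulAut ↥N ≃* (ZMod p)ˣ :=
    (MulAut.congr e).trans ((multAutMulEquiv (ZMod p)).symm.trans (AddEquiv.toMultiplicativeLeft (ZMod.AddAutEquivUnits p)))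
  let χ : ↥M →* (ZMod p)ˣ := Γ.toMonoidHom.comp A
  have hkey : ∀ mm : ↥M, unitAct p (χ mm) = MulAut.congr e (A mm) := by
    intro mm
    have h1 : ∀ u : (ZMod p)ˣ, unitAct p u
        = multAutMulEquiv (ZMod p) ((AddEquiv.toMultiplicativeLeft (ZMod.AddAutEquivUnits p)).symm u) := fun u => rfl
    rw [h1]
    show multAutMulEquiv (ZMod p) ((AddEquiv.toMultiplicativeLeft (ZMod.AddAutEquivUnits p)).symm
      ((AddEquiv.toMultiplicativeLeft (ZMod.AddAutEquivUnits p)) ((multAutMulEquiv (ZMod p)).symm (MulAut.congr e (A mm))))) = _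
    rw [MulEquiv.symm_apply_apply, MulEquiv.apply_symm_apply]
  have hχinj : Function.Injective χ := by
    rw [injective_iff_map_eq_one]
    intro mm hmm
    have hA1 : A mm = 1 := Γ.map_eq_one_iff.mp hmm
    have hcent : (mm : G) ∈ Subgroup.centralizer (N : Set G) := by
      rw [Subgroup.mem_centralizer_iff]
      intro n hn
      have h2 : MulAut.conjNormal (mm : G) (⟨n, hn⟩ : N) = ⟨n, hn⟩ := by
        rw [show MulAut.conjNormal (mm : G) = A mm from rfl, hA1]; rfl
      have h3 : (mm : G) * n * (mm : G)⁻¹ = n := by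
        have h4 := congrArg Subtype.val h2
        simpa [MulAut.conjNormal_apply] using h4
      calc n * mm = ((mm : G) * n * (mm : G)⁻¹) * mm := by rw [h3]
      _ = mm * n := by group
    set K := M ⊓ Subgroup.centralizer (N : Set G) with hKdef
    have hKconj : ∀ g' : G, g' ∈ M → ∀ h ∈ K, g' * h * g'⁻¹ ∈ K := by
      intro g' hg' h hh
      rw [hKdef, Subgroup.mem_inf] at hh
      obtain ⟨hhM, hhC⟩ := hh
      rw [hKdef, Subgroup.mem_inf]
      refine ⟨M.mul_mem (M.mul_mem hg' hhM) (M.inv_mem hg'), ?_⟩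
      rw [Subgroup.mem_centralizer_iff]
      intro s hs
      have hs' : g'⁻¹ * s * g' ∈ N := by
        have := hN.conj_mem s hs g'⁻¹
        simpa using this
      have hcomm := Subgroup.mem_centralizer_iff.mp hhC _ hs'
      have hrw : s = g' * (g'⁻¹ * s * g') * g'⁻¹ := by group
      calc s * (g' * h * g'⁻¹) = g' * ((g'⁻¹ * s * g') * h) * g'⁻¹ := by
            rw [hrw]; group
      _ = g' * (h * (g'⁻¹ * s * g')) * g'⁻¹ := by rw [hcomm]
      _ = (g' * h * g'⁻¹) * s := by rw [hrw]; group
    have hKnormal : K.Normal := by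
      rw [← Subgroup.normalizer_eq_top_iff, eq_top_iff, ← hsup, sup_le_iff]
      constructor
      · intro n hn
        rw [Subgroup.mem_normalizer_iff]
        intro h
        constructor
        · intro hh
          have hcomm := Subgroup.mem_centralizer_iff.mp hh.2 _ hn
          have h5 : n * h * n⁻¹ = h := by
            rw [hcomm]; group
          rw [h5]; exact hh
        · intro hh
          have h5 : n * (n * h * n⁻¹) = (n * h * n⁻¹) * n :=
            Subgroup.mem_centralizer_iff.mp hh.2 _ hn
          have heq : n * h * n⁻¹ = h := by
            calc n * h * n⁻¹ = n⁻¹ * (n * (n * h * n⁻¹)) := by group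
            _ = n⁻¹ * (n * h * n⁻¹ * n) := by rw [h5]
            _ = h := by group
          rw [heq] at hh; exact hh
      · intro g' hg'
        rw [Subgroup.mem_normalizer_iff]
        intro h
        constructor
        · exact fun hh => hKconj g' hg' h hh
        · intro hh
          have h7 := hKconj g'⁻¹ (M.inv_mem hg') _ hh
          have h8 : g'⁻¹ * (g' * h * g'⁻¹) * g'⁻¹⁻¹ = h := by group
          rwa [h8] at h7
    haveI := hKnormal
    have hKbot : K ≤ M.normalCore := Subgroup.normal_le_normalCore.mpr inf_le_left
    rw [hcore] at hKbot
    have h9 : (mm : G) ∈ K := Subgroup.mem_inf.mpr ⟨mm.2, hcent⟩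
    have h10 : (mm : G) = 1 := Subgroup.mem_bot.mp (hKbot h9)
    exact Subtype.ext h10
  let C := χ.range
  let θ : ↥M ≃* ↥C := MonoidHom.ofInjective hχinj
  let f₁ : Multiplicative (ZMod p) →* G := N.subtype.comp e.symm.toMonoidHom
  let f₂ : ↥C →* G := M.subtype.comp θ.symm.toMonoidHom
  have hcompat : ∀ c : ↥C, f₁.comp (((unitAct p).comp C.subtype) c).toMonoidHom
      = (MulAut.conj (f₂ c)).toMonoidHom.comp f₁ := by
    intro c
    ext a
    set mm := θ.symm c with hmdef
    have hcm : ((c : ↥C) : (ZMod p)ˣ) = χ mm := by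
      conv_lhs => rw [← θ.apply_symm_apply c]
      exact MonoidHom.ofInjective_apply hχinj
    have hL : ((unitAct p).comp C.subtype) c a = e (A mm (e.symm a)) := by
      show unitAct p ((c : ↥C) : (ZMod p)ˣ) a = _
      rw [hcm, hkey]
      rfl
    show f₁ (((unitAct p).comp C.subtype) c a) = MulAut.conj (f₂ c) (f₁ a)
    rw [hL]
    show ((e.symm (e (A mm (e.symm a))) : ↥N) : G) = f₂ c * ((e.symm a : ↥N) : G) * (f₂ c)⁻¹
    rw [MulEquiv.symm_apply_apply]
    show ((A mm (e.symm a) : ↥N) : G) = ((mm : G)) * ((e.symm a : ↥N) : G) * (mm : G)⁻¹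
    exact MulAut.conjNormal_apply (mm : G) (e.symm a)
  let L := SemidirectProduct.lift f₁ f₂ hcompat
  have hLinj : Function.Injective L := by
    rw [injective_iff_map_eq_one]
    intro w hw
    have hw' : f₁ w.left * f₂ w.right = 1 := hw
    have h1 : f₁ w.left ∈ N := SetLike.coe_mem (e.symm w.left)
    have h2 : f₂ w.right ∈ M := SetLike.coe_mem (θ.symm w.right)
    have h3 : f₁ w.left ∈ M := by
      have h3' : f₁ w.left = (f₂ w.right)⁻¹ := eq_inv_of_mul_eq_one_left ?_
      · rw [h3']; exact M.inv_mem h2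
      · rw [← hw']
    have h4 : f₁ w.left = 1 := by
      have h4' : f₁ w.left ∈ N ⊓ M := ⟨h1, h3⟩
      rw [hinf] at h4'; exact Subgroup.mem_bot.mp h4'
    have h5 : f₂ w.right = 1 := by rwa [h4, one_mul] at hw'
    have hw1 : w.left = 1 := by
      have h6 : (e.symm w.left : ↥N) = 1 := by
        apply Subgroup.subtype_injective
        exact h4
      exact e.symm.map_eq_one_iff.mp h6
    have hw2 : w.right = 1 := by
      have h7 : (θ.symm w.right : ↥M) = 1 := by
        apply Subgroup.subtype_injective
        exact h5
      exact θ.symm.map_eq_one_iff.mp h7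
    exact SemidirectProduct.ext hw1 hw2
  have hLsurj : Function.Surjective L := by
    rw [← MonoidHom.range_eq_top, eq_top_iff, ← hsup, sup_le_iff]
    constructor
    · intro n hn
      refine ⟨SemidirectProduct.inl (e ⟨n, hn⟩), ?_⟩
      rw [SemidirectProduct.lift_inl]
      show ((e.symm (e ⟨n, hn⟩) : ↥N) : G) = n
      rw [MulEquiv.symm_apply_apply]
    · intro g' hg'
      refine ⟨SemidirectProduct.inr (θ ⟨g', hg'⟩), ?_⟩
      rw [SemidirectProduct.lift_inr]
      show ((θ.symm (θ ⟨g', hg'⟩) : ↥M) : G) = g'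
      rw [MulEquiv.symm_apply_apply]
  exact ⟨p, hp, C, ⟨(MulEquiv.ofBijective L ⟨hLinj, hLsurj⟩).symm⟩⟩

end Forward

/-- A finite group is primitive and supersolvable if and only if it is isomorphic to a
semidirect product `(ℤ/pℤ) ⋊ C` with `p` prime and `C ≤ Aut(ℤ/pℤ) ≅ (ℤ/pℤ)ˣ`. -/
theorem stmt5 (G : Type*) [Group G] [Finite G] :
    (IsPrimitiveGroup G ∧ IsSupersolvableGroup G) ↔
      ∃ (p : ℕ) (_ : p.Prime) (C : Subgroup (ZMod p)ˣ),
        Nonempty (G ≃* Multiplicative (ZMod p) ⋊[(unitAct p).comp C.subtype] C) := by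
  constructor
  · rintro ⟨hprim, hss⟩
    exact forward_dir hprim hss
  · rintro ⟨p, hp, C, ⟨e⟩⟩
    exact ⟨(primitive_sdp hp C).of_mulEquiv e.symm, (supersolvable_sdp hp C).of_mulEquiv e.symm⟩
end

section
/- Let G be a nontrivial group, H ≤ G, and let C be a nontrivial class of finite groups closed under taking quotients. Then HN = G for all normal subgroups N of G with G/N ∈ C if and only if HN = G for all normal subgroups N of G with G/N ∈ C and G/N primitive. -/
/-- Let `G` be a nontrivial group, `H ≤ G`, and `C` a nontrivial class of finite groups
closed under quotients. Then `HN = G` for all normal `N` with `G/N ∈ C` iff `HN = G`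
for all normal `N` with `G/N ∈ C` primitive. -/
theorem stmt6 {G : Type u} [Group G] [Nontrivial G]
    (C : ∀ (K : Type u) [Group K], Prop)
    (hCfin : ∀ (K : Type u) [Group K], C K → Finite K)
    (hCnontriv : ∃ (K : Type u) (_ : Group K), C K ∧ Nontrivial K)
    (hCquot : ∀ (K L : Type u) [Group K] [Group L] (f : K →* L),
      Function.Surjective f → C K → C L)
    (H : Subgroup G) :
    (∀ (N : Subgroup G) [N.Normal], C (G ⧸ N) → H ⊔ N = ⊤) ↔
      (∀ (N : Subgroup G) [N.Normal],
        C (G ⧸ N) → IsPrimitiveGroup (G ⧸ N) → H ⊔ N = ⊤) := by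
  constructor
  · intro h N _ hC _
    exact h N hC
  · intro h N hN hC
    have hQfin : Finite (G ⧸ N) := hCfin (G ⧸ N) hC
    set π : G →* G ⧸ N := QuotientGroup.mk' N with hπ
    have hπsurj : Function.Surjective π := QuotientGroup.mk'_surjective N
    have hker : π.ker = N := QuotientGroup.ker_mk' N
    by_contra htop
    -- the image of H in the quotient is proper
    have hHim : H.map π ≠ ⊤ := by
      intro hT
      apply htop
      have := congrArg (Subgroup.comap π) hT
      rwa [Subgroup.comap_map_eq, hker, Subgroup.comap_top] at this
    have : Finite (Subgroup (G ⧸ N)) :=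
      Finite.of_injective (fun s => (s : Set (G ⧸ N))) SetLike.coe_injective
    obtain ⟨M', hM', hle⟩ := (eq_top_or_exists_le_coatom (H.map π)).resolve_left hHim
    -- the normal core of M', pulled back to G
    set K : Subgroup G := (M'.normalCore).comap π with hK
    have hKnormal : K.Normal := Subgroup.Normal.comap M'.normalCore_normal π
    have hNK : N ≤ K := by
      intro x hx
      have : π x = 1 := by rwa [← hker] at hx
      simp only [hK, Subgroup.mem_comap, this]
      exact Subgroup.one_mem _
    -- the natural surjection G ⧸ N →* G ⧸ K
    set ψ : (G ⧸ N) →* (G ⧸ K) := QuotientGroup.map N K (MonoidHom.id G) hNK with hψ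
    have hψmk : ∀ g : G, ψ (π g) = QuotientGroup.mk g := fun g => rfl
    have hψsurj : Function.Surjective ψ := by
      intro x
      obtain ⟨g, rfl⟩ := QuotientGroup.mk_surjective x
      exact ⟨π g, rfl⟩
    have hCK : C (G ⧸ K) := hCquot (G ⧸ N) (G ⧸ K) ψ hψsurj hC
    -- kernel of ψ is the normal core of M'
    have hkerψ : ψ.ker = M'.normalCore := by
      ext x
      obtain ⟨g, rfl⟩ := hπsurj x
      rw [MonoidHom.mem_ker, hψmk, QuotientGroup.eq_one_iff]
      simp [hK, Subgroup.mem_comap]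
    have hcoreM : M'.normalCore ≤ M' := Subgroup.normalCore_le M'
    -- comap along ψ of the image of M' is M'
    have hcomapM : (M'.map ψ).comap ψ = M' := by
      rw [Subgroup.comap_map_eq, hkerψ, sup_of_le_left hcoreM]
    -- the image of M' in G ⧸ K is a coatom
    have hcoatom : IsCoatom (M'.map ψ) := by
      constructor
      · intro hT
        rw [hT, Subgroup.comap_top] at hcomapM
        exact hM'.1 hcomapM.symm
      · intro X hX
        have h1 : M' < X.comap ψ := by
          rw [← hcomapM]
          refine lt_of_le_of_ne (Subgroup.comap_mono hX.le) fun hEq => ?_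
          have := congrArg (Subgroup.map ψ) hEq
          rw [Subgroup.map_comap_eq_self_of_surjective hψsurj,
            Subgroup.map_comap_eq_self_of_surjective hψsurj] at this
          exact hX.ne this
        have := hM'.2 _ h1
        have := congrArg (Subgroup.map ψ) this
        rwa [Subgroup.map_comap_eq_self_of_surjective hψsurj,
          Subgroup.map_top_of_surjective ψ hψsurj] at this
    -- the image of M' has trivial normal core
    have hcore : (M'.map ψ).normalCore = ⊥ := by
      rw [eq_bot_iff]
      intro x hx
      obtain ⟨q, rfl⟩ := hψsurj x
      have hq : q ∈ M'.normalCore := by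
        intro p
        have h2 : ψ p * ψ q * (ψ p)⁻¹ ∈ M'.map ψ := hx (ψ p)
        rw [← map_inv, ← map_mul, ← map_mul] at h2
        have h3 : p * q * p⁻¹ ∈ (M'.map ψ).comap ψ := h2
        rwa [hcomapM] at h3
      rw [← hkerψ] at hq
      exact hq
    have hprim : IsPrimitiveGroup (G ⧸ K) := ⟨M'.map ψ, hcoatom, hcore⟩
    -- apply the hypothesis to K
    have hHK : H ⊔ K = ⊤ := h K hCK hprim
    -- but H ⊔ K is contained in the pullback of M', a proper subgroup
    have hHle : H ≤ M'.comap π := by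
      intro x hx
      exact hle (Subgroup.mem_map_of_mem π hx)
    have hKle : K ≤ M'.comap π := Subgroup.comap_mono hcoreM
    have : M'.comap π = ⊤ := top_le_iff.mp (hHK ▸ sup_le hHle hKle)
    have := congrArg (Subgroup.map π) this
    rw [Subgroup.map_comap_eq_self_of_surjective hπsurj,
      Subgroup.map_top_of_surjective π hπsurj] at this
    exact hM'.1 this
end

section
/- (Gaschütz) Let π : G → K be a surjective homomorphism of finite groups, let m ≥ d(G), and let (k_1,...,k_m) be a generating tuple for K. Then there exists a generating tuple (g_1,...,g_m) for G with π(g_i) = k_i for all i. -/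
open Subgroup Set Function

private theorem gaschutz_count (n : ℕ) : ∀ {G : Type u} {K : Type v} [Group G] [Group K]
    [Finite G], Nat.card G = n → ∀ (π : G →* K), Function.Surjective π →
    ∀ (m : ℕ) (k k' : Fin m → K), Subgroup.closure (Set.range k) = ⊤ →
    Subgroup.closure (Set.range k') = ⊤ →
    Nat.card {g : Fin m → G // (∀ i, π (g i) = k i) ∧ Subgroup.closure (Set.range g) = ⊤} =
    Nat.card {g : Fin m → G // (∀ i, π (g i) = k' i) ∧ Subgroup.closure (Set.range g) = ⊤} := by
  induction n using Nat.strong_induction_on with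
  | _ n IH =>
  intro G K _ _ _ hn π hπ m k k' hk hk'
  classical
  letI : Fintype (Subgroup G) := Fintype.ofFinite _
  -- the fiber over a subgroup H
  set fib : (Fin m → K) → Subgroup G → Type u :=
    fun c H => {g : Fin m → G // (∀ i, π (g i) = c i) ∧ Subgroup.closure (Set.range g) = H}
    with hfib
  -- Step A: total lift counts agree
  have htot : Nat.card {g : Fin m → G // ∀ i, π (g i) = k i} =
      Nat.card {g : Fin m → G // ∀ i, π (g i) = k' i} := by
    refine Nat.card_congr ?_
    refine ⟨fun g => ⟨fun i => g.1 i * (surjInv hπ (k i))⁻¹ * surjInv hπ (k' i), ?_⟩,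
            fun g => ⟨fun i => g.1 i * (surjInv hπ (k' i))⁻¹ * surjInv hπ (k i), ?_⟩, ?_, ?_⟩
    · intro i; simp [g.2 i, surjInv_eq hπ]
    · intro i; simp [g.2 i, surjInv_eq hπ]
    · intro g; ext i; simp [mul_assoc]
    · intro g; ext i; simp [mul_assoc]
  -- Step B: decomposition of lifts by the subgroup generated
  have hsum : ∀ (c : Fin m → K),
      Nat.card {g : Fin m → G // ∀ i, π (g i) = c i} = ∑ H : Subgroup G, Nat.card (fib c H) := by
    intro c
    have e1 : {g : Fin m → G // ∀ i, π (g i) = c i} ≃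
        Σ H : Subgroup G, fib c H := by
      refine (Equiv.sigmaFiberEquiv
        (fun g : {g : Fin m → G // ∀ i, π (g i) = c i} =>
          Subgroup.closure (Set.range g.1))).symm.trans (Equiv.sigmaCongrRight fun H => ?_)
      exact Equiv.subtypeSubtypeEquivSubtypeInter (fun g : Fin m → G => ∀ i, π (g i) = c i)
        (fun g => Subgroup.closure (Set.range g) = H)
    rw [Nat.card_congr e1]
    letI := fun H : Subgroup G => Fintype.ofFinite (fib c H)
    simp [Nat.card_eq_fintype_card]
  -- Step C: for H ≠ ⊤ the fiber counts agree
  have hstep : ∀ H : Subgroup G, H ≠ ⊤ → Nat.card (fib k H) = Nat.card (fib k' H) := by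
    intro H hH
    by_cases hmap : H.map π = ⊤
    · -- use the induction hypothesis for H
      have hcard : Nat.card H < n := by
        rw [← hn]
        exact lt_of_le_of_ne H.card_le_card_group (fun he => hH (H.eq_top_of_card_eq he))
      have hsurj : Function.Surjective (π.comp H.subtype) := by
        rw [← MonoidHom.range_eq_top, MonoidHom.range_comp, Subgroup.range_subtype,
          hmap]
      have hequiv : ∀ (c : Fin m → K),
          fib c H ≃ {h : Fin m → H // (∀ i, (π.comp H.subtype) (h i) = c i) ∧
            Subgroup.closure (Set.range h) = ⊤} := by
        intro c
        have key : ∀ (h : Fin m → H),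
            Subgroup.closure (Set.range fun i => (h i : G)) = H ↔
            Subgroup.closure (Set.range h) = ⊤ := by
          intro h
          rw [← (Subgroup.map_injective H.subtype_injective).eq_iff,
            MonoidHom.map_closure, ← Set.range_comp, ← MonoidHom.range_eq_map,
            Subgroup.range_subtype]
          rfl
        refine ⟨fun g => ⟨fun i => ⟨g.1 i, ?_⟩, ?_, ?_⟩, fun h => ⟨fun i => (h.1 i : G), ?_, ?_⟩,
          ?_, ?_⟩
        · exact (le_of_eq g.2.2) (Subgroup.subset_closure (Set.mem_range_self i))
        · intro i; exact g.2.1 i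
        · exact (key _).mp g.2.2
        · intro i; exact h.2.1 i
        · exact (key _).mpr h.2.2
        · intro g; rfl
        · intro h; rfl
      rw [Nat.card_congr (hequiv k), Nat.card_congr (hequiv k')]
      exact IH _ hcard rfl (π.comp H.subtype) hsurj m k k' hk hk'
    · -- both fibers are empty
      have hempty : ∀ (c : Fin m → K), Subgroup.closure (Set.range c) = ⊤ → IsEmpty (fib c H) := by
        intro c hc
        refine ⟨fun g => hmap ?_⟩
        have : (fun i => π (g.1 i)) = c := funext g.2.1
        rw [← g.2.2, MonoidHom.map_closure, ← Set.range_comp]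
        calc Subgroup.closure (Set.range (π ∘ g.1)) = Subgroup.closure (Set.range c) := by
              rw [show π ∘ g.1 = c from this]
          _ = ⊤ := hc
      rw [@Nat.card_of_isEmpty _ (hempty k hk), @Nat.card_of_isEmpty _ (hempty k' hk')]
  -- Step D: combine
  have hsum2 : ∑ H : Subgroup G, Nat.card (fib k H) = ∑ H : Subgroup G, Nat.card (fib k' H) := by
    rw [← hsum k, ← hsum k', htot]
  rw [← Finset.add_sum_erase _ _ (Finset.mem_univ (⊤ : Subgroup G)),
    ← Finset.add_sum_erase _ _ (Finset.mem_univ (⊤ : Subgroup G))] at hsum2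
  have hrest : ∑ H ∈ Finset.univ.erase (⊤ : Subgroup G), Nat.card (fib k H) =
      ∑ H ∈ Finset.univ.erase (⊤ : Subgroup G), Nat.card (fib k' H) :=
    Finset.sum_congr rfl fun H hH => hstep H (Finset.ne_of_mem_erase hH)
  rw [hrest] at hsum2
  exact Nat.add_right_cancel hsum2

/-- Gaschütz's lemma: if `π : G → K` is a surjective homomorphism of finite groups,
`m ≥ d(G)` (i.e. `G` has a generating set of size at most `m`), and `(k₁,…,k_m)` is a
generating tuple of `K`, then there is a generating tuple `(g₁,…,g_m)` of `G` with
`π(gᵢ) = kᵢ` for all `i`. -/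
theorem stmt15 {G K : Type*} [Group G] [Finite G] [Group K] [Finite K]
    (π : G →* K) (hπ : Function.Surjective π) (m : ℕ)
    (hm : ∃ T : Finset G, T.card ≤ m ∧ Subgroup.closure (T : Set G) = ⊤)
    (k : Fin m → K) (hk : Subgroup.closure (Set.range k) = ⊤) :
    ∃ g : Fin m → G, Subgroup.closure (Set.range g) = ⊤ ∧ ∀ i, π (g i) = k i := by
  classical
  obtain ⟨T, hTm, hTgen⟩ := hm
  set l := T.toList with hl
  have hlen : l.length ≤ m := by rw [hl, Finset.length_toList]; exact hTm
  set g₀ : Fin m → G := fun i => l.getD i 1 with hg₀def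
  have hg₀ : Subgroup.closure (Set.range g₀) = ⊤ := by
    rw [eq_top_iff, ← hTgen]
    refine Subgroup.closure_le _ |>.mpr ?_
    refine Set.Subset.trans ?_ Subgroup.subset_closure
    intro t ht
    have htl : t ∈ l := by rw [hl, Finset.mem_toList]; exact ht
    obtain ⟨j, hjt⟩ := List.mem_iff_get.mp htl
    refine ⟨⟨j, lt_of_lt_of_le j.2 hlen⟩, ?_⟩
    rw [hg₀def]
    simp only [List.getD_eq_getElem?_getD]
    rw [List.getElem?_eq_getElem j.2]
    simpa using hjt
  set k₀ : Fin m → K := fun i => π (g₀ i) with hk₀def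
  have hk₀ : Subgroup.closure (Set.range k₀) = ⊤ := by
    have : Set.range k₀ = π '' Set.range g₀ := (Set.range_comp π g₀)
    rw [this, ← MonoidHom.map_closure, hg₀, ← MonoidHom.range_eq_map,
      MonoidHom.range_eq_top.mpr hπ]
  have hcount := gaschutz_count (Nat.card G) rfl π hπ m k k₀ hk hk₀
  have hpos : 0 < Nat.card {g : Fin m → G //
      (∀ i, π (g i) = k₀ i) ∧ Subgroup.closure (Set.range g) = ⊤} := by
    have : Nonempty {g : Fin m → G //
        (∀ i, π (g i) = k₀ i) ∧ Subgroup.closure (Set.range g) = ⊤} :=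
      ⟨⟨g₀, fun i => rfl, hg₀⟩⟩
    exact Nat.card_pos
  rw [← hcount] at hpos
  obtain ⟨⟨g, hg1, hg2⟩, -⟩ := Nat.card_pos_iff.mp hpos
  exact ⟨g, hg2, hg1⟩
end

section
/- Let J = {f_1,...,f_m} ⊂ ℤ[X_1,...,X_n]. If S(J), the set of primes p for which f_1,...,f_m have a common root modulo p, is finite, then there exist an integer a ≠ 0 and polynomials ℓ_1,...,ℓ_m ∈ ℤ[X_1,...,X_n] with Σ f_i ℓ_i = a; moreover every prime in S(J) divides a. -/
open Polynomial in
/-- Clearing denominators of a rational polynomial. -/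
private lemma poly_clear (q : Polynomial ℚ) :
    ∃ N : ℤ, N ≠ 0 ∧ ∃ Q : Polynomial ℤ,
      Q.map (Int.castRingHom ℚ) = Polynomial.C (N : ℚ) * q := by
  induction q using Polynomial.induction_on' with
  | add p q hp hq =>
    obtain ⟨N1, h1, Q1, e1⟩ := hp
    obtain ⟨N2, h2, Q2, e2⟩ := hq
    refine ⟨N1 * N2, mul_ne_zero h1 h2, C N2 * Q1 + C N1 * Q2, ?_⟩
    simp only [Polynomial.map_add, Polynomial.map_mul, Polynomial.map_C, Polynomial.map_intCast,
      map_intCast, eq_intCast, e1, e2]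
    push_cast
    ring
  | monomial n a =>
    refine ⟨(a.den : ℤ), by exact_mod_cast a.den_nz, monomial n a.num, ?_⟩
    rw [Polynomial.map_monomial, C_mul_monomial]
    congr 1
    rw [eq_intCast]
    push_cast
    rw [mul_comm, Rat.mul_den_eq_num]

open Polynomial in
private lemma poly_clear_fam {ι : Type} [Fintype ι] (q : ι → Polynomial ℚ) :
    ∃ N : ℤ, N ≠ 0 ∧ ∃ Q : ι → Polynomial ℤ,
      ∀ j, (Q j).map (Int.castRingHom ℚ) = Polynomial.C (N : ℚ) * q j := by
  classical
  choose N hN Q hQ using fun j => poly_clear (q j)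
  refine ⟨∏ j, N j, Finset.prod_ne_zero_iff.2 fun j _ => hN j,
    fun j => C (∏ j' ∈ Finset.univ.erase j, N j') * Q j, fun j => ?_⟩
  rw [Polynomial.map_mul, Polynomial.map_C, hQ j, ← mul_assoc, ← C_mul]
  have := Finset.mul_prod_erase Finset.univ N (Finset.mem_univ j)
  congr 2
  rw [eq_intCast]
  push_cast [← this]
  ring

private lemma mv_clear {n : ℕ} (q : MvPolynomial (Fin n) ℚ) :
    ∃ N : ℤ, N ≠ 0 ∧ ∃ Q : MvPolynomial (Fin n) ℤ,
      MvPolynomial.map (Int.castRingHom ℚ) Q = MvPolynomial.C (N : ℚ) * q := by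
  induction q using MvPolynomial.induction_on with
  | C a =>
    refine ⟨(a.den : ℤ), by exact_mod_cast a.den_nz, MvPolynomial.C a.num, ?_⟩
    rw [MvPolynomial.map_C, ← MvPolynomial.C_mul]
    congr 1
    rw [eq_intCast]
    push_cast
    rw [mul_comm, Rat.mul_den_eq_num]
  | add p q hp hq =>
    obtain ⟨N1, h1, Q1, e1⟩ := hp
    obtain ⟨N2, h2, Q2, e2⟩ := hq
    refine ⟨N1 * N2, mul_ne_zero h1 h2,
      MvPolynomial.C N2 * Q1 + MvPolynomial.C N1 * Q2, ?_⟩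
    simp only [map_add, map_mul, MvPolynomial.map_C, map_intCast, eq_intCast, e1, e2]
    push_cast
    ring
  | mul_X p i hp =>
    obtain ⟨N1, h1, Q1, e1⟩ := hp
    exact ⟨N1, h1, Q1 * MvPolynomial.X i, by
      simp only [map_mul, MvPolynomial.map_X, e1]; ring⟩

private lemma mv_clear_fam {n : ℕ} {ι : Type} [Fintype ι] (q : ι → MvPolynomial (Fin n) ℚ) :
    ∃ N : ℤ, N ≠ 0 ∧ ∃ Q : ι → MvPolynomial (Fin n) ℤ,
      ∀ j, MvPolynomial.map (Int.castRingHom ℚ) (Q j) = MvPolynomial.C (N : ℚ) * q j := by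
  classical
  choose N hN Q hQ using fun j => mv_clear (q j)
  refine ⟨∏ j, N j, Finset.prod_ne_zero_iff.2 fun j _ => hN j,
    fun j => MvPolynomial.C (∏ j' ∈ Finset.univ.erase j, N j') * Q j, fun j => ?_⟩
  rw [map_mul, MvPolynomial.map_C, hQ j, ← mul_assoc, ← MvPolynomial.C_mul]
  have := Finset.mul_prod_erase Finset.univ N (Finset.mem_univ j)
  congr 2
  rw [eq_intCast]
  push_cast [← this]
  ring

open Polynomial in
/-- A monic nonconstant integer polynomial has a root modulo infinitely many primes. -/
private lemma primes_root (G : Polynomial ℤ) (hG : G.Monic) (hdeg : 1 ≤ G.natDegree)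
    (S : Set ℕ) (hS : S.Finite) :
    ∃ p : ℕ, p ∉ S ∧ p.Prime ∧ ∃ t : ZMod p,
      Polynomial.eval t (G.map (Int.castRingHom (ZMod p))) = 0 := by
  classical
  set c := G.eval 0 with hc
  by_cases hc0 : c = 0
  · obtain ⟨p, hp⟩ := (Nat.infinite_setOf_prime.diff hS).nonempty
    refine ⟨p, hp.2, hp.1, ((0 : ℤ) : ZMod p), ?_⟩
    rw [Polynomial.eval_intCast_map, Int.cast_id, ← hc, hc0, map_zero]
  · set B := hS.toFinset.filter Nat.Prime with hB
    set P : ℤ := ∏ p ∈ B, (p : ℤ) with hPdef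
    have hP : P ≠ 0 := Finset.prod_ne_zero_iff.2 fun p hp => by
      exact_mod_cast (Finset.mem_filter.1 hp).2.ne_zero
    set d : ℤ := c * c * P with hd
    have hd0 : d ≠ 0 := mul_ne_zero (mul_ne_zero hc0 hc0) hP
    -- find k = d * j with |eval k G| > |c|
    have hfin2 : {x : ℤ | G.eval x ∈ Set.Icc (-|c|) |c|}.Finite := by
      have hsub : {x : ℤ | G.eval x ∈ Set.Icc (-|c|) |c|} ⊆
          ⋃ v ∈ Set.Icc (-|c|) |c|, {x : ℤ | (G - C v).IsRoot x} := by
        intro x hx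
        simp only [Set.mem_iUnion, Set.mem_setOf_eq]
        exact ⟨G.eval x, hx, by simp [IsRoot]⟩
      refine Set.Finite.subset (Set.Finite.biUnion (Set.finite_Icc _ _) fun v _ => ?_) hsub
      refine Polynomial.finite_setOf_isRoot fun h0 => ?_
      have hGC := congrArg natDegree (sub_eq_zero.1 h0)
      rw [natDegree_C] at hGC
      omega
    have hinf : (Set.range fun j : ℤ => d * j).Infinite :=
      Set.infinite_range_of_injective (mul_right_injective₀ hd0)
    obtain ⟨k, hk⟩ := (hinf.diff hfin2).nonempty
    obtain ⟨⟨j, rfl⟩, hk2⟩ := hk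
    set k := d * j with hkdef
    have h1 : k ∣ G.eval k - c := by
      simpa using Polynomial.sub_dvd_eval_sub k 0 G
    obtain ⟨v, hv⟩ := h1
    set e : ℤ := c * P * j with he
    have hke : k = c * e := by rw [hkdef, hd, he]; ring
    set u : ℤ := 1 + e * v with hu
    have hevalk : G.eval k = c * u := by
      have : G.eval k = c + k * v := by linarith [hv]
      rw [this, hke, hu]; ring
    have habs : ¬ |G.eval k| ≤ |c| := by
      intro h
      exact hk2 (by simpa [Set.mem_Icc] using abs_le.1 h)
    have hu1 : 1 < u.natAbs := by
      by_contra h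
      push_neg at h
      have hu2 : |u| ≤ 1 := by
        rw [Int.abs_eq_natAbs]; exact_mod_cast h
      have : |G.eval k| ≤ |c| := by
        rw [hevalk, abs_mul]
        calc |c| * |u| ≤ |c| * 1 := mul_le_mul_of_nonneg_left hu2 (abs_nonneg c)
          _ = |c| := mul_one _
      exact habs this
    set p := u.natAbs.minFac with hp
    have hpp : p.Prime := Nat.minFac_prime (by omega)
    have hpu : (p : ℤ) ∣ u := by
      have h1 : (p : ℤ) ∣ (u.natAbs : ℤ) := Int.natCast_dvd_natCast.2 (Nat.minFac_dvd _)
      exact (Int.natAbs_dvd).1 (dvd_trans h1 (Int.natAbs_dvd.2 dvd_rfl))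
    have hpS : p ∉ S := by
      intro hmem
      have hpB : p ∈ B := Finset.mem_filter.2 ⟨hS.mem_toFinset.2 hmem, hpp⟩
      have h2 : (p : ℤ) ∣ P := Finset.dvd_prod_of_mem _ hpB
      have h3 : (p : ℤ) ∣ e * v :=
        Dvd.dvd.mul_right (Dvd.dvd.mul_right (Dvd.dvd.mul_left h2 c) j) v
      have h4 : (p : ℤ) ∣ 1 := by
        have := dvd_sub hpu h3
        simpa [hu] using this
      have h5 : (p : ℤ) = 1 := Int.eq_one_of_dvd_one (by positivity) h4
      exact hpp.ne_one (by exact_mod_cast h5)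
    refine ⟨p, hpS, hpp, ((k : ℤ) : ZMod p), ?_⟩
    rw [Polynomial.eval_intCast_map]
    have : (p : ℤ) ∣ G.eval k := by
      rw [hevalk]; exact Dvd.dvd.mul_left hpu c
    exact_mod_cast (ZMod.intCast_zmod_eq_zero_iff_dvd _ _).2 this

/-- Key computation: evaluating the "cleared" sum. -/
private lemma key_sum {n : ℕ} {A : Type*} [CommRing A] (φ : ℤ →+* A)
    (F : MvPolynomial (Fin n) ℤ) (N : ℤ) (z u : Fin n → A)
    (hz : ∀ j, z j = φ N * u j) :
    ∑ s ∈ F.support, φ (F.coeff s * N ^ (F.totalDegree - ∑ j, s j)) * ∏ j, (z j) ^ (s j)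
      = φ N ^ F.totalDegree * MvPolynomial.eval₂ φ u F := by
  rw [MvPolynomial.eval₂_eq', Finset.mul_sum]
  refine Finset.sum_congr rfl fun s hs => ?_
  have hle : (∑ j, s j) ≤ F.totalDegree := by
    have := MvPolynomial.le_totalDegree hs
    rwa [Finsupp.sum_fintype _ _ (fun _ => rfl)] at this
  have hpow : φ N ^ (F.totalDegree - ∑ j, s j) * φ N ^ (∑ j, s j) = φ N ^ F.totalDegree := by
    rw [← pow_add, Nat.sub_add_cancel hle]
  calc φ (F.coeff s * N ^ (F.totalDegree - ∑ j, s j)) * ∏ j, (z j) ^ (s j)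
      = φ (F.coeff s) * φ N ^ (F.totalDegree - ∑ j, s j) *
          (φ N ^ (∑ j, s j) * ∏ j, (u j) ^ (s j)) := by
        rw [map_mul, map_pow]
        congr 1
        simp only [hz, mul_pow, Finset.prod_mul_distrib, Finset.prod_pow_eq_pow_sum]
    _ = φ N ^ F.totalDegree * (φ (F.coeff s) * ∏ j, (u j) ^ (s j)) := by
        rw [← hpow]; ring

/-- The cleared polynomial in one variable. -/
private noncomputable def Wpoly {n : ℕ} (F : MvPolynomial (Fin n) ℤ) (Q : Fin n → Polynomial ℤ)
    (N : ℤ) : Polynomial ℤ :=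
  ∑ s ∈ F.support, Polynomial.C (F.coeff s * N ^ (F.totalDegree - ∑ j, s j)) *
    ∏ j, (Q j) ^ (s j)

private lemma Wpoly_image {n : ℕ} {A : Type*} [CommRing A]
    (F : MvPolynomial (Fin n) ℤ) (Q : Fin n → Polynomial ℤ) (N : ℤ)
    (ψ : Polynomial ℤ →+* A) :
    ψ (Wpoly F Q N) = ∑ s ∈ F.support,
      (ψ.comp Polynomial.C) (F.coeff s * N ^ (F.totalDegree - ∑ j, s j)) *
        ∏ j, (ψ (Q j)) ^ (s j) := by
  rw [Wpoly, map_sum]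
  refine Finset.sum_congr rfl fun s hs => ?_
  rw [map_mul, map_prod]
  simp only [map_pow, RingHom.coe_comp, Function.comp_apply]

/-- If the `fᵢ` have a common root in a number field, then they have a common root
modulo infinitely many primes. -/
private lemma exists_prime_root {m n : ℕ} (f : Fin m → MvPolynomial (Fin n) ℤ)
    (K : Type) [Field K] [Algebra ℚ K] [FiniteDimensional ℚ K]
    (x : Fin n → K) (hx : ∀ i, MvPolynomial.eval₂ (Int.castRingHom K) x (f i) = 0)
    (S : Set ℕ) (hS : S.Finite) :
    ∃ p : ℕ, p ∉ S ∧ p.Prime ∧ ∃ y : Fin n → ZMod p,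
      ∀ i, MvPolynomial.eval y (MvPolynomial.map (Int.castRingHom (ZMod p)) (f i)) = 0 := by
  classical
  haveI : CharZero K := charZero_of_injective_algebraMap (algebraMap ℚ K).injective
  -- primitive element
  obtain ⟨θ₀, hθ₀⟩ := Field.exists_primitive_element ℚ K
  have hint0 : IsIntegral ℚ θ₀ := Algebra.IsIntegral.isIntegral θ₀
  -- θ₀ is algebraic over ℤ
  have halgZ : IsAlgebraic ℤ θ₀ := by
    obtain ⟨P, hPne, hP⟩ := hint0.isAlgebraic
    obtain ⟨NP, hNP, Phat, hPhat⟩ := poly_clear P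
    refine ⟨Phat, fun h0 => ?_, ?_⟩
    · rw [h0, Polynomial.map_zero] at hPhat
      rcases mul_eq_zero.1 hPhat.symm with h | h
      · rw [Polynomial.C_eq_zero] at h
        exact hNP (by exact_mod_cast h)
      · exact hPne h
    · have h2 : Polynomial.aeval θ₀ (Phat.map (algebraMap ℤ ℚ)) = Polynomial.aeval θ₀ Phat :=
        Polynomial.aeval_map_algebraMap ℚ θ₀ Phat
      rw [← h2, algebraMap_int_eq, hPhat, map_mul, Polynomial.aeval_C, hP, mul_zero]
  -- integral multiple
  obtain ⟨y0, hy0, hyint⟩ := halgZ.exists_integral_multiple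
  set θ : K := algebraMap ℤ K y0 * θ₀ with hθdef
  have hθint : IsIntegral ℤ θ := by rw [hθdef, ← Algebra.smul_def]; exact hyint
  have hθintQ : IsIntegral ℚ θ := hθint.tower_top
  have hy0K : ((y0 : ℤ) : K) ≠ 0 := Int.cast_ne_zero.2 hy0
  have halg : (algebraMap ℤ K) y0 = ((y0 : ℤ) : K) := by rw [algebraMap_int_eq]; rfl
  -- primitivity of θ
  have hprim : ∀ v : K, ∃ q : Polynomial ℚ, Polynomial.aeval θ q = v := by
    intro v
    have hθ0mem : θ₀ ∈ IntermediateField.adjoin ℚ ({θ} : Set K) := by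
      have h1 : θ₀ = (((y0 : ℤ) : K))⁻¹ * θ := by
        rw [hθdef, halg, inv_mul_cancel_left₀ hy0K]
      have hmemc : (((y0 : ℤ) : K)) ∈ IntermediateField.adjoin ℚ ({θ} : Set K) := by
        have h2 : ((y0 : ℤ) : K) = algebraMap ℚ K ((y0 : ℚ)) := (map_intCast _ _).symm
        rw [h2]
        exact IntermediateField.algebraMap_mem _ _
      rw [h1]
      exact mul_mem (inv_mem hmemc) (IntermediateField.mem_adjoin_simple_self ℚ θ)
    have htop : IntermediateField.adjoin ℚ ({θ} : Set K) = ⊤ := by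
      refine le_antisymm le_top ?_
      rw [← hθ₀]
      exact IntermediateField.adjoin_le_iff.2 (by
        intro z hz
        rw [Set.mem_singleton_iff] at hz
        exact hz ▸ hθ0mem)
    have hv : v ∈ Algebra.adjoin ℚ ({θ} : Set K) := by
      have hvtop : v ∈ (⊤ : IntermediateField ℚ K) := IntermediateField.mem_top
      rw [← htop] at hvtop
      rw [← IntermediateField.adjoin_simple_toSubalgebra_of_isAlgebraic hθintQ.isAlgebraic]
      exact (IntermediateField.mem_toSubalgebra _ _).2 hvtop
    rw [Algebra.adjoin_singleton_eq_range_aeval] at hv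
    obtain ⟨q, hq⟩ := hv
    exact ⟨q, hq⟩
  -- choose polynomials representing the coordinates
  choose q hq using fun j => hprim (x j)
  obtain ⟨N, hN0, Q, hQ⟩ := poly_clear_fam q
  have hQθ : ∀ j, Polynomial.eval₂ (Int.castRingHom K) θ (Q j) = ((N : ℤ) : K) * x j := by
    intro j
    have h1 : Polynomial.eval₂ (Int.castRingHom K) θ (Q j) = Polynomial.aeval θ (Q j) := by
      rw [Polynomial.aeval_def, algebraMap_int_eq]
    rw [h1, ← Polynomial.aeval_map_algebraMap ℚ θ (Q j), algebraMap_int_eq, hQ j, map_mul,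
      Polynomial.aeval_C, hq j]
    congr 1
    exact map_intCast _ _
  set G := minpoly ℤ θ with hGdef
  have hGmonic : G.Monic := minpoly.monic hθint
  have hGdeg : 1 ≤ G.natDegree := minpoly.natDegree_pos hθint
  have hWdvd : ∀ i, G ∣ Wpoly (f i) Q N := by
    intro i
    apply minpoly.isIntegrallyClosed_dvd hθint
    have h1 : Polynomial.aeval θ (Wpoly (f i) Q N) =
        (Polynomial.eval₂RingHom (Int.castRingHom K) θ) (Wpoly (f i) Q N) := by
      rw [Polynomial.aeval_def, algebraMap_int_eq]; rfl
    rw [h1, Wpoly_image]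
    rw [show (Polynomial.eval₂RingHom (Int.castRingHom K) θ).comp Polynomial.C
        = Int.castRingHom K from RingHom.ext fun c => by simp]
    rw [key_sum (Int.castRingHom K) (f i) N _ x (fun j => by
      simp only [Polynomial.coe_eval₂RingHom]
      rw [hQθ j, eq_intCast])]
    rw [hx i, mul_zero]
  have hNfin : {p : ℕ | p.Prime ∧ (p : ℤ) ∣ N}.Finite := by
    apply Set.Finite.subset (Set.finite_Icc 0 N.natAbs)
    rintro p ⟨hp1, hp2⟩
    refine Set.mem_Icc.2 ⟨Nat.zero_le _, ?_⟩
    have h3 : p ∣ N.natAbs := by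
      have := Int.natAbs_dvd_natAbs.2 hp2
      simpa using this
    exact Nat.le_of_dvd (Int.natAbs_pos.2 hN0) h3
  obtain ⟨p, hpS, hpp, t, ht⟩ := primes_root G hGmonic hGdeg
    (S ∪ {p : ℕ | p.Prime ∧ (p : ℤ) ∣ N}) (hS.union hNfin)
  haveI : Fact p.Prime := ⟨hpp⟩
  have hpS' : p ∉ S := fun h => hpS (Set.mem_union_left _ h)
  have hpN : (((N : ℤ)) : ZMod p) ≠ 0 := by
    intro h
    exact hpS (Set.mem_union_right _ ⟨hpp, (ZMod.intCast_zmod_eq_zero_iff_dvd _ _).1 h⟩)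
  set ψ : Polynomial ℤ →+* ZMod p :=
    (Polynomial.evalRingHom t).comp (Polynomial.mapRingHom (Int.castRingHom (ZMod p))) with hψ
  refine ⟨p, hpS', hpp, fun j => (((N : ℤ) : ZMod p))⁻¹ * ψ (Q j), fun i => ?_⟩
  rw [MvPolynomial.eval_map]
  have hW0 : ψ (Wpoly (f i) Q N) = 0 := by
    obtain ⟨H, hH⟩ := hWdvd i
    rw [hH, map_mul]
    have hG0 : ψ G = 0 := by
      simpa [hψ] using ht
    rw [hG0, zero_mul]
  rw [Wpoly_image _ _ _ ψ] at hW0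
  rw [show ψ.comp Polynomial.C = Int.castRingHom (ZMod p) from RingHom.ext fun c => by
    simp [hψ]] at hW0
  rw [key_sum (Int.castRingHom (ZMod p)) (f i) N _
    (fun j => (((N : ℤ) : ZMod p))⁻¹ * ψ (Q j)) (fun j => by
      rw [eq_intCast, mul_inv_cancel_left₀ hpN])] at hW0
  have hNM : ((Int.castRingHom (ZMod p)) N) ^ (f i).totalDegree ≠ 0 := by
    rw [eq_intCast]; exact pow_ne_zero _ hpN
  exact (mul_eq_zero.1 hW0).resolve_left hNM

/-- If the set of primes `p` for which `f₁,…,f_m ∈ ℤ[X₁,…,X_n]` have a common root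
modulo `p` is finite, then there are a nonzero integer `a` and polynomials `ℓᵢ` with
`Σ fᵢ ℓᵢ = a`, and every prime in the set divides `a`. -/
theorem stmt16 (m n : ℕ) (hm : 1 ≤ m) (hn : 1 ≤ n)
    (f : Fin m → MvPolynomial (Fin n) ℤ)
    (hfin : {p : ℕ | p.Prime ∧ ∃ x : Fin n → ZMod p,
        ∀ i, MvPolynomial.eval x
          (MvPolynomial.map (Int.castRingHom (ZMod p)) (f i)) = 0}.Finite) :
    ∃ (a : ℤ) (ℓ : Fin m → MvPolynomial (Fin n) ℤ), a ≠ 0 ∧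
      (∑ i, f i * ℓ i) = MvPolynomial.C a ∧
      ∀ p ∈ {p : ℕ | p.Prime ∧ ∃ x : Fin n → ZMod p,
        ∀ i, MvPolynomial.eval x
          (MvPolynomial.map (Int.castRingHom (ZMod p)) (f i)) = 0}, (p : ℤ) ∣ a := by
  classical
  by_cases htop : Ideal.span
      (Set.range fun i => MvPolynomial.map (Int.castRingHom ℚ) (f i)) = ⊤
  · -- the ideal over ℚ is everything: clear denominators
    have h1 : (1 : MvPolynomial (Fin n) ℚ) ∈ Ideal.span
        (Set.range fun i => MvPolynomial.map (Int.castRingHom ℚ) (f i)) := by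
      rw [htop]; trivial
    obtain ⟨c, hc⟩ := (Submodule.mem_span_range_iff_exists_fun _).1 h1
    obtain ⟨a, ha0, L, hL⟩ := mv_clear_fam c
    have hsum : (∑ i, f i * L i) = MvPolynomial.C a := by
      apply MvPolynomial.map_injective (Int.castRingHom ℚ) Int.cast_injective
      rw [map_sum, MvPolynomial.map_C]
      have h2 : ∀ i : Fin m, (MvPolynomial.map (Int.castRingHom ℚ)) (f i * L i)
          = MvPolynomial.C (a : ℚ) *
            (c i * (MvPolynomial.map (Int.castRingHom ℚ)) (f i)) := by
        intro i
        rw [map_mul, hL i]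
        ring
      rw [Finset.sum_congr rfl fun i _ => h2 i, ← Finset.mul_sum]
      simp only [smul_eq_mul] at hc
      rw [hc, mul_one, eq_intCast]
    refine ⟨a, L, ha0, hsum, ?_⟩
    rintro p ⟨hpp, xbar, hxbar⟩
    haveI : Fact p.Prime := ⟨hpp⟩
    have h4 := congrArg
      (fun g => MvPolynomial.eval xbar (MvPolynomial.map (Int.castRingHom (ZMod p)) g)) hsum
    simp only [map_sum, map_mul, MvPolynomial.map_C] at h4
    rw [Finset.sum_congr rfl (fun i _ => by rw [hxbar i, zero_mul])] at h4
    rw [Finset.sum_const_zero] at h4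
    rw [MvPolynomial.eval_C, eq_intCast] at h4
    exact (ZMod.intCast_zmod_eq_zero_iff_dvd _ _).1 h4.symm
  · -- proper ideal: get a maximal ideal, number field, contradiction with finiteness
    exfalso
    obtain ⟨M, hMmax, hMle⟩ := Ideal.exists_le_maximal _ htop
    letI : Field (MvPolynomial (Fin n) ℚ ⧸ M) := Ideal.Quotient.field M
    haveI : Algebra.FiniteType ℚ (MvPolynomial (Fin n) ℚ ⧸ M) :=
      Algebra.FiniteType.of_surjective (Ideal.Quotient.mkₐ ℚ M)
        (Ideal.Quotient.mkₐ_surjective ℚ M)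
    haveI : Algebra.IsIntegral ℚ (MvPolynomial (Fin n) ℚ ⧸ M) := by
      have h := MvPolynomial.quotient_mk_comp_C_isIntegral_of_isJacobsonRing M
      exact Algebra.isIntegral_def.mpr h
    haveI : FiniteDimensional ℚ (MvPolynomial (Fin n) ℚ ⧸ M) :=
      Algebra.finite_iff_isIntegral_and_finiteType.2 ⟨inferInstance, inferInstance⟩
    set x : Fin n → MvPolynomial (Fin n) ℚ ⧸ M :=
      fun j => Ideal.Quotient.mk M (MvPolynomial.X j) with hxdef
    have hx : ∀ i, MvPolynomial.eval₂ (Int.castRingHom (MvPolynomial (Fin n) ℚ ⧸ M)) x (f i)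
        = 0 := by
      intro i
      have h2 : (MvPolynomial.eval₂Hom (Int.castRingHom (MvPolynomial (Fin n) ℚ ⧸ M)) x)
          = ((Ideal.Quotient.mk M).comp (MvPolynomial.map (Int.castRingHom ℚ))) := by
        apply MvPolynomial.ringHom_ext
        · intro r
          simp [MvPolynomial.map_C]
        · intro j
          simp [hxdef]
      have h3 : MvPolynomial.eval₂ (Int.castRingHom (MvPolynomial (Fin n) ℚ ⧸ M)) x (f i)
          = (Ideal.Quotient.mk M) (MvPolynomial.map (Int.castRingHom ℚ) (f i)) :=
        RingHom.congr_fun h2 (f i)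
      rw [h3, Ideal.Quotient.eq_zero_iff_mem]
      exact hMle (Ideal.subset_span ⟨i, rfl⟩)
    obtain ⟨p, hpS, hpp, y, hy⟩ := exists_prime_root f (MvPolynomial (Fin n) ℚ ⧸ M) x hx
      _ hfin
    exact hpS ⟨hpp, y, hy⟩
end
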